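/- arXiv:0910.5492 — 5 statements merged into one kernel-verified Lean document; each statement's English description precedes it below -/
import Mathlib

section
/- Let λ₁, λ₂ be finite positive Borel measures on ℝ and let λ₁' , λ₂' be measures with bounded densities f₁, f₂ with respect to λ₁, λ₂. If the functions s ↦ exp(2πi tₙ s) converge weak-* to ψ₁ in L^∞(λ₁), to ψ₂ in L^∞(λ₂), and to ψ in L^∞(λ₁ ∗ λ₂), then ∫ ψ(s₁+s₂) dλ₁'(s₁) dλ₂'(s₂) = (∫ ψ₁ dλ₁')·(∫ ψ₂ dλ₂'). -/
open MeasureTheory Filter Real Complex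
open scoped NNReal ENNReal ProbabilityTheory

/-- Weak-* convergence in `L^∞(μ)`. -/
def WeakStarTendsto (μ : Measure ℝ) (φn : ℕ → ℝ → ℂ) (φ : ℝ → ℂ) : Prop :=
  ∀ f : ℝ → ℂ, Integrable f μ →
    Tendsto (fun n => ∫ s, φn n s * f s ∂μ) atTop (nhds (∫ s, φ s * f s ∂μ))

/-- If `g ∘ fst` is a.e. strongly measurable w.r.t. a finite measure on `ℝ × ℝ`, then `g` is
a.e. strongly measurable w.r.t. the first marginal. -/
lemma aesm_of_fst {ρ : Measure (ℝ × ℝ)} [IsFiniteMeasure ρ] {g : ℝ → ℂ}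
    (hg : AEStronglyMeasurable (fun p : ℝ × ℝ => g p.1) ρ) :
    AEStronglyMeasurable g ρ.fst := by
  obtain ⟨H, hH, hae⟩ := hg
  have hdis : ρ.fst ⊗ₘ ρ.condKernel = ρ := ρ.disintegrate ρ.condKernel
  rw [← hdis] at hae
  have h2 : ∀ᵐ s ∂ρ.fst, ∀ᵐ y ∂ρ.condKernel s, g s = H (s, y) :=
    Measure.ae_ae_of_ae_compProd hae
  refine ⟨fun s => ∫ y, H (s, y) ∂ρ.condKernel s, hH.integral_kernel_prod_right', ?_⟩
  filter_upwards [h2] with s hs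
  have : ∫ y, H (s, y) ∂ρ.condKernel s = ∫ _, g s ∂ρ.condKernel s :=
    integral_congr_ae (by filter_upwards [hs] with y hy using hy.symm)
  rw [this, integral_const, probReal_univ, one_smul]

/-- The measurable equivalence `(x, y) ↦ (x + y, x)` of `ℝ × ℝ`. -/
noncomputable def addEquiv : ℝ × ℝ ≃ᵐ ℝ × ℝ where
  toFun p := (p.1 + p.2, p.1)
  invFun q := (q.2, q.1 - q.2)
  left_inv p := by simp
  right_inv q := by simp
  measurable_toFun := by
    show Measurable fun p : ℝ × ℝ => ((p.1 + p.2, p.1) : ℝ × ℝ)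
    fun_prop
  measurable_invFun := by
    show Measurable fun q : ℝ × ℝ => ((q.2, q.1 - q.2) : ℝ × ℝ)
    fun_prop

lemma integral_add_map (ρ : Measure (ℝ × ℝ)) [IsFiniteMeasure ρ] (g : ℝ → ℂ) :
    ∫ p : ℝ × ℝ, g (p.1 + p.2) ∂ρ
      = ∫ s, g s ∂(Measure.map (fun p : ℝ × ℝ => p.1 + p.2) ρ) := by
  by_cases hg : AEStronglyMeasurable g (Measure.map (fun p : ℝ × ℝ => p.1 + p.2) ρ)
  · exact (integral_map (by fun_prop) hg).symm
  · rw [integral_non_aestronglyMeasurable hg, integral_non_aestronglyMeasurable]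
    intro hcomp
    apply hg
    haveI : IsFiniteMeasure (Measure.map (addEquiv : ℝ × ℝ → ℝ × ℝ) ρ) :=
      Measure.isFiniteMeasure_map ρ _
    have h1 : AEStronglyMeasurable (fun q : ℝ × ℝ => g q.1)
        (Measure.map (addEquiv : ℝ × ℝ → ℝ × ℝ) ρ) := by
      rw [(addEquiv.measurableEmbedding).aestronglyMeasurable_map_iff]
      exact hcomp
    have h2 := aesm_of_fst h1
    have h3 : (Measure.map (addEquiv : ℝ × ℝ → ℝ × ℝ) ρ).fst
        = Measure.map (fun p : ℝ × ℝ => p.1 + p.2) ρ := by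
      rw [Measure.fst, Measure.map_map measurable_fst addEquiv.measurable]
      rfl
    rwa [h3] at h2

lemma integral_withDensity_mul (μ : Measure ℝ) {g : ℝ → ℝ≥0} (hg : Measurable g) (φ : ℝ → ℂ) :
    ∫ s, φ s ∂(μ.withDensity fun s => (g s : ℝ≥0∞)) = ∫ s, φ s * ((g s : ℝ) : ℂ) ∂μ := by
  rw [integral_withDensity_eq_integral_smul hg]
  congr 1
  ext s
  rw [NNReal.smul_def, Complex.real_smul, mul_comm]

theorem limit_of_convolution_integrals
    (lam₁ lam₂ : Measure ℝ) [IsFiniteMeasure lam₁] [IsFiniteMeasure lam₂]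
    (f₁ f₂ : ℝ → ℝ≥0) (hf₁ : Measurable f₁) (hf₂ : Measurable f₂)
    (C₁ C₂ : ℝ≥0) (hb₁ : ∀ s, f₁ s ≤ C₁) (hb₂ : ∀ s, f₂ s ≤ C₂)
    (t : ℕ → ℝ) (ψ₁ ψ₂ ψ : ℝ → ℂ)
    (h1 : WeakStarTendsto lam₁ (fun n s => Complex.exp (2 * π * Complex.I * t n * s)) ψ₁)
    (h2 : WeakStarTendsto lam₂ (fun n s => Complex.exp (2 * π * Complex.I * t n * s)) ψ₂)
    (h : WeakStarTendsto (Measure.map (fun p : ℝ × ℝ => p.1 + p.2) (lam₁.prod lam₂))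
      (fun n s => Complex.exp (2 * π * Complex.I * t n * s)) ψ) :
    ∫ p : ℝ × ℝ, ψ (p.1 + p.2)
        ∂((lam₁.withDensity fun s => (f₁ s : ℝ≥0∞)).prod
          (lam₂.withDensity fun s => (f₂ s : ℝ≥0∞)))
      = (∫ s, ψ₁ s ∂(lam₁.withDensity fun s => (f₁ s : ℝ≥0∞)))
        * ∫ s, ψ₂ s ∂(lam₂.withDensity fun s => (f₂ s : ℝ≥0∞)) := by
  have fin : ∀ (lam : Measure ℝ) (g : ℝ → ℝ≥0) (C : ℝ≥0), IsFiniteMeasure lam →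
      (∀ s, g s ≤ C) → IsFiniteMeasure (lam.withDensity fun s => (g s : ℝ≥0∞)) := by
    intro lam g C hlam hb
    constructor
    rw [withDensity_apply _ MeasurableSet.univ, Measure.restrict_univ]
    calc ∫⁻ s, (g s : ℝ≥0∞) ∂lam ≤ ∫⁻ _, (C : ℝ≥0∞) ∂lam :=
          lintegral_mono fun s => ENNReal.coe_le_coe.2 (hb s)
      _ = (C : ℝ≥0∞) * lam Set.univ := lintegral_const _
      _ < ⊤ := ENNReal.mul_lt_top ENNReal.coe_lt_top (measure_lt_top lam _)
  haveI hμ₁ : IsFiniteMeasure (lam₁.withDensity fun s => (f₁ s : ℝ≥0∞)) :=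
    fin lam₁ f₁ C₁ inferInstance hb₁
  haveI hμ₂ : IsFiniteMeasure (lam₂.withDensity fun s => (f₂ s : ℝ≥0∞)) :=
    fin lam₂ f₂ C₂ inferInstance hb₂
  set μ₁ := lam₁.withDensity fun s => (f₁ s : ℝ≥0∞) with hμ₁def
  set μ₂ := lam₂.withDensity fun s => (f₂ s : ℝ≥0∞) with hμ₂def
  set ν := Measure.map (fun p : ℝ × ℝ => p.1 + p.2) (lam₁.prod lam₂) with hνdef
  set S := Measure.map (fun p : ℝ × ℝ => p.1 + p.2) (μ₁.prod μ₂) with hSdef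
  haveI : IsFiniteMeasure S := Measure.isFiniteMeasure_map _ _
  haveI : IsFiniteMeasure ν := Measure.isFiniteMeasure_map _ _
  have hac : S ≪ ν :=
    Measure.AbsolutelyContinuous.map
      (Measure.AbsolutelyContinuous.prod (withDensity_absolutelyContinuous lam₁ _)
        (withDensity_absolutelyContinuous lam₂ _)) (by fun_prop)
  set f : ℝ → ℂ := fun s => (((S.rnDeriv ν s).toReal : ℝ) : ℂ) with hfdef
  have hfint : Integrable f ν := (Measure.integrable_toReal_rnDeriv).ofReal
  -- key identity: integrating against `f` w.r.t. `ν` is integrating w.r.t. `S`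
  have key : ∀ φ : ℝ → ℂ, ∫ s, φ s * f s ∂ν = ∫ s, φ s ∂S := by
    intro φ
    have hmeas : Measurable fun s => (S.rnDeriv ν s).toNNReal :=
      (Measure.measurable_rnDeriv S ν).ennreal_toNNReal
    have hwd : ν.withDensity (fun s => ((S.rnDeriv ν s).toNNReal : ℝ≥0∞)) = S := by
      rw [withDensity_congr_ae
        (by filter_upwards [Measure.rnDeriv_lt_top S ν] with s hs using
          ENNReal.coe_toNNReal hs.ne)]
      exact Measure.withDensity_rnDeriv_eq _ _ hac
    calc ∫ s, φ s * f s ∂ν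
        = ∫ s, (S.rnDeriv ν s).toNNReal • φ s ∂ν := by
          congr 1; ext s
          rw [NNReal.smul_def, Complex.real_smul, mul_comm]
          rfl
      _ = ∫ s, φ s ∂(ν.withDensity fun s => ((S.rnDeriv ν s).toNNReal : ℝ≥0∞)) :=
          (integral_withDensity_eq_integral_smul hmeas _).symm
      _ = ∫ s, φ s ∂S := by rw [hwd]
  -- the integrals against exp split as products
  have hsum : ∀ n, ∫ s, Complex.exp (2 * π * Complex.I * t n * s) * f s ∂ν
      = (∫ s, Complex.exp (2 * π * Complex.I * t n * s) * ((f₁ s : ℝ) : ℂ) ∂lam₁)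
        * ∫ s, Complex.exp (2 * π * Complex.I * t n * s) * ((f₂ s : ℝ) : ℂ) ∂lam₂ := by
    intro n
    rw [key]
    have hexp : AEStronglyMeasurable (fun s : ℝ => Complex.exp (2 * π * Complex.I * t n * s)) S :=
      (Complex.continuous_exp.comp (by fun_prop)).aestronglyMeasurable
    rw [hSdef, integral_map (by fun_prop) hexp]
    push_cast
    simp_rw [mul_add, Complex.exp_add]
    rw [integral_prod_mul (μ := μ₁) (ν := μ₂)
        (fun s : ℝ => Complex.exp (2 * π * Complex.I * t n * s))
        (fun s : ℝ => Complex.exp (2 * π * Complex.I * t n * s)),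
      integral_withDensity_mul lam₁ hf₁, integral_withDensity_mul lam₂ hf₂]
  -- integrability of densities
  have hint : ∀ (lam : Measure ℝ) (g : ℝ → ℝ≥0) (C : ℝ≥0), IsFiniteMeasure lam →
      Measurable g → (∀ s, g s ≤ C) → Integrable (fun s => ((g s : ℝ) : ℂ)) lam := by
    intro lam g C hlam hg hb
    refine Integrable.mono' (integrable_const (C : ℝ))
      (Complex.measurable_ofReal.comp hg.coe_nnreal_real).aestronglyMeasurable ?_
    filter_upwards with s
    rw [Complex.norm_real, Real.norm_eq_abs, _root_.abs_of_nonneg (g s).coe_nonneg]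
    exact_mod_cast hb s
  have hB := h1 _ (hint lam₁ f₁ C₁ inferInstance hf₁ hb₁)
  have hC := h2 _ (hint lam₂ f₂ C₂ inferInstance hf₂ hb₂)
  have hA := h f hfint
  rw [show (fun n => ∫ s, Complex.exp (2 * π * Complex.I * t n * s) * f s ∂ν)
      = fun n => (∫ s, Complex.exp (2 * π * Complex.I * t n * s) * ((f₁ s : ℝ) : ℂ) ∂lam₁)
        * ∫ s, Complex.exp (2 * π * Complex.I * t n * s) * ((f₂ s : ℝ) : ℂ) ∂lam₂
    from funext hsum] at hA
  have hlim := tendsto_nhds_unique hA (hB.mul hC)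
  calc ∫ p : ℝ × ℝ, ψ (p.1 + p.2) ∂(μ₁.prod μ₂)
      = ∫ s, ψ s ∂S := integral_add_map _ _
    _ = ∫ s, ψ s * f s ∂ν := (key ψ).symm
    _ = (∫ s, ψ₁ s * ((f₁ s : ℝ) : ℂ) ∂lam₁) * ∫ s, ψ₂ s * ((f₂ s : ℝ) : ℂ) ∂lam₂ := hlim
    _ = (∫ s, ψ₁ s ∂μ₁) * ∫ s, ψ₂ s ∂μ₂ := by
        rw [integral_withDensity_mul lam₁ hf₁, integral_withDensity_mul lam₂ hf₂]
end

section
/- Let (Ω, F, P) be a probability space and C₀, C₁ independent sub-σ-algebras. Let τ be a measure-preserving automorphism of (Ω, F, P) with τ∘τ = id which maps C₀ onto C₁ and C₁ onto C₀, and let G be a sub-σ-algebra contained in the τ-invariant σ-algebra. Then for every f ∈ L²(G): (i) E[f | C₀] and E[f | C₁] have the same L² norm; (ii) E[f | C₀] − E[E[f|C₀] | trivial] and E[f | C₁] − E[E[f|C₁] | trivial] are orthogonal in L²₀; and consequently ‖E[f | C_i] − E[f]‖ ≤ (1/√2)·‖E[f | C₀ ∨ C₁] − E[f]‖ ≤ (1/√2)·‖f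 − E[f]‖ for i = 0, 1. -/
open MeasureTheory ProbabilityTheory
open scoped ENNReal

private lemma mul_int_of_memL2 {Ω : Type*} {m0 : MeasurableSpace Ω} {P : Measure Ω}
    {u v : Ω → ℝ} (hu : MemLp u 2 P) (hv : MemLp v 2 P) :
    Integrable (fun ω => u ω * v ω) P := by
  have h : MemLp (v • u) 1 P := by
    exact hu.smul hv
  rw [memLp_one_iff_integrable] at h
  exact h.congr (Filter.Eventually.of_forall fun ω => by
    simp [Pi.smul_apply, smul_eq_mul, mul_comm])

private lemma memL2_condexp {Ω : Type*} {m : MeasurableSpace Ω} {m0 : MeasurableSpace Ω}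
    {P : Measure Ω} [IsProbabilityMeasure P] (hm : m ≤ m0)
    {f : Ω → ℝ} (hf : MemLp f 2 P) : MemLp (P[f|m]) 2 P := by
  have heq : P[f|m] =ᵐ[P] (condExpL2 ℝ ℝ hm (hf.toLp f) : Ω →₂[P] ℝ) := by
    refine (ae_eq_condExp_of_forall_setIntegral_eq hm (hf.integrable one_le_two)
      (fun s _ _ => ((Lp.memLp _).integrable one_le_two).integrableOn)
      (fun s hs hμs => ?_) (aestronglyMeasurable_condExpL2 hm _)).symm
    rw [integral_condExpL2_eq hm (hf.toLp f) hs hμs.ne]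
    exact setIntegral_congr_ae (hm s hs) ((hf.coeFn_toLp).mono fun x hx _ => hx)
  exact (Lp.memLp _).ae_eq heq.symm

/-- If `u` is the conditional expectation of `v` on `m`, the inner product of `u` and `v`
equals the squared norm of `u`. -/
private lemma inner_proj_eq {Ω : Type*} {m : MeasurableSpace Ω} {m0 : MeasurableSpace Ω}
    (P : Measure Ω) [IsProbabilityMeasure P] (hm : m ≤ m0) {u v : Ω → ℝ}
    (hu : StronglyMeasurable[m] u) (hcond : P[v|m] =ᵐ[P] u)
    (huv : Integrable (fun ω => u ω * v ω) P) (hv : Integrable v P) :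
    ∫ ω, u ω * v ω ∂P = ∫ ω, u ω * u ω ∂P := by
  have h1 : ∫ ω, u ω * v ω ∂P = ∫ ω, (P[fun ω => u ω * v ω|m]) ω ∂P :=
    (integral_condExp hm).symm
  have h2 : P[fun ω => u ω * v ω|m] =ᵐ[P] fun ω => u ω * (P[v|m]) ω :=
    condExp_mul_of_stronglyMeasurable_left hu huv hv
  have h3 : (fun ω => u ω * (P[v|m]) ω) =ᵐ[P] fun ω => u ω * u ω := by
    filter_upwards [hcond] with ω hω
    simp [hω]
  rw [h1, integral_congr_ae ((h2.trans h3))]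

private lemma sq_int_le {Ω : Type*} {m0 : MeasurableSpace Ω} {P : Measure Ω}
    {u v : Ω → ℝ} (hu : MemLp u 2 P) (hv : MemLp v 2 P)
    (h : ∫ ω, u ω * v ω ∂P = ∫ ω, u ω * u ω ∂P) :
    ∫ ω, u ω * u ω ∂P ≤ ∫ ω, v ω * v ω ∂P := by
  have hvv := mul_int_of_memL2 hv hv
  have huv := mul_int_of_memL2 hu hv
  have huu := mul_int_of_memL2 hu hu
  have h0 : (0:ℝ) ≤ ∫ ω, (v ω - u ω) * (v ω - u ω) ∂P :=
    integral_nonneg fun ω => mul_self_nonneg _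
  have e1 : (fun ω => (v ω - u ω) * (v ω - u ω))
      = fun ω => (v ω * v ω - u ω * v ω) - (u ω * v ω - u ω * u ω) := by
    funext ω; ring
  have hs1 : Integrable (fun ω => v ω * v ω - u ω * v ω) P := hvv.sub huv
  have hs2 : Integrable (fun ω => u ω * v ω - u ω * u ω) P := huv.sub huu
  rw [e1, integral_sub hs1 hs2, integral_sub hvv huv, integral_sub huv huu] at h0
  linarith

private lemma elp_two_eq {Ω : Type*} {m0 : MeasurableSpace Ω} {P : Measure Ω}
    {u : Ω → ℝ} (hu : MemLp u 2 P) :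
    eLpNorm u 2 P = ENNReal.ofReal (Real.sqrt (∫ ω, u ω * u ω ∂P)) := by
  rw [hu.eLpNorm_eq_integral_rpow_norm (by norm_num) (by norm_num)]
  congr 1
  have h2 : (2:ℝ≥0∞).toReal = (2:ℝ) := by norm_num
  rw [h2]
  have h1 : ∀ ω, ‖u ω‖ ^ (2:ℝ) = u ω * u ω := fun ω => by
    rw [show (2:ℝ) = ((2:ℕ):ℝ) by norm_num, Real.rpow_natCast]
    simp [pow_two, Real.norm_eq_abs, abs_mul_abs_self]
  simp_rw [h1]
  rw [Real.sqrt_eq_rpow, one_div]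

private lemma half_bound {A H : ℝ} (hH : 0 ≤ H) (h : 2 * A ≤ H) :
    ENNReal.ofReal (Real.sqrt A) ≤ ENNReal.ofReal (1 / Real.sqrt 2) * ENNReal.ofReal (Real.sqrt H) := by
  rw [← ENNReal.ofReal_mul (by positivity)]
  refine ENNReal.ofReal_le_ofReal ?_
  have h1 : A ≤ H / 2 := by linarith
  calc Real.sqrt A ≤ Real.sqrt (H / 2) := Real.sqrt_le_sqrt h1
    _ = 1 / Real.sqrt 2 * Real.sqrt H := by
        rw [Real.sqrt_div hH 2, div_eq_mul_inv, one_div, mul_comm]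

theorem condexp_symmetric_independent_contraction
    {Ω : Type*} {m0 : MeasurableSpace Ω} (P : Measure Ω) [IsProbabilityMeasure P]
    (C₀ C₁ G : MeasurableSpace Ω) (hC₀ : C₀ ≤ m0) (hC₁ : C₁ ≤ m0) (hG : G ≤ m0)
    (hindep : ProbabilityTheory.Indep C₀ C₁ P)
    (τ : Ω → Ω) (hτ : @MeasurePreserving Ω Ω m0 m0 τ P P) (hτinv : τ ∘ τ = id)
    (hmap0 : MeasurableSpace.comap τ C₀ = C₁)
    (hmap1 : MeasurableSpace.comap τ C₁ = C₀)
    (hGinv : ∀ s : Set Ω, MeasurableSet[G] s → τ ⁻¹' s = s)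
    (f : Ω → ℝ) (hf : MemLp f 2 P) (hfG : StronglyMeasurable[G] f) :
    eLpNorm (P[f|C₀]) 2 P = eLpNorm (P[f|C₁]) 2 P ∧
    (∫ ω, ((P[f|C₀]) ω - ∫ x, f x ∂P) * ((P[f|C₁]) ω - ∫ x, f x ∂P) ∂P = 0) ∧
    (eLpNorm (fun ω => (P[f|C₀]) ω - ∫ x, f x ∂P) 2 P
        ≤ ENNReal.ofReal (1 / Real.sqrt 2) *
          eLpNorm (fun ω => (P[f|C₀ ⊔ C₁]) ω - ∫ x, f x ∂P) 2 P) ∧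
    (eLpNorm (fun ω => (P[f|C₁]) ω - ∫ x, f x ∂P) 2 P
        ≤ ENNReal.ofReal (1 / Real.sqrt 2) *
          eLpNorm (fun ω => (P[f|C₀ ⊔ C₁]) ω - ∫ x, f x ∂P) 2 P) ∧
    (eLpNorm (fun ω => (P[f|C₀ ⊔ C₁]) ω - ∫ x, f x ∂P) 2 P
        ≤ eLpNorm (fun ω => f ω - ∫ x, f x ∂P) 2 P) := by
  letI : MeasurableSpace Ω := m0
  have hfi : Integrable f P := hf.integrable one_le_two
  have hm : C₀ ⊔ C₁ ≤ m0 := sup_le hC₀ hC₁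
  -- τ is a measurable involution
  have hτm : @Measurable Ω Ω m0 m0 τ := hτ.measurable
  have hττ : ∀ ω, τ (τ ω) = ω := fun ω => congrFun hτinv ω
  have hτemb : @MeasurableEmbedding Ω Ω m0 m0 τ :=
    (@MeasurableEquiv.mk Ω Ω m0 m0 ⟨τ, τ, hττ, hττ⟩ hτm hτm).measurableEmbedding
  -- f is τ-invariant
  have hfτ : ∀ ω, f (τ ω) = f ω := by
    intro ω
    have h : τ ⁻¹' (f ⁻¹' {f ω}) = f ⁻¹' {f ω} :=
      hGinv _ (hfG.measurable (measurableSet_singleton _))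
    have hω : ω ∈ f ⁻¹' {f ω} := rfl
    rw [← h] at hω
    exact hω
  -- key: (P[f|C₀]) ∘ τ is a version of P[f|C₁]
  have hkey : (fun ω => (P[f|C₀]) (τ ω)) =ᵐ[P] P[f|C₁] := by
    refine ae_eq_condExp_of_forall_setIntegral_eq hC₁ hfi ?_ ?_ ?_
    · intro s _ _
      exact ((hτ.integrable_comp_emb hτemb).2 (integrable_condExp (m := C₀))).integrableOn
    · intro s hs _
      have hs' : MeasurableSet[MeasurableSpace.comap τ C₀] s := hmap0 ▸ hs
      obtain ⟨t, ht, rfl⟩ := hs'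
      have h1 : ∫ x in τ ⁻¹' t, (P[f|C₀]) (τ x) ∂P = ∫ x in t, (P[f|C₀]) x ∂P :=
        hτ.setIntegral_preimage_emb hτemb _ t
      have h2 : ∫ x in t, (P[f|C₀]) x ∂P = ∫ x in t, f x ∂P :=
        setIntegral_condExp hC₀ hfi ht
      have h3 : ∫ x in τ ⁻¹' t, f x ∂P = ∫ x in τ ⁻¹' t, f (τ x) ∂P :=
        integral_congr_ae (Filter.Eventually.of_forall fun x => (hfτ x).symm)
      have h4 : ∫ x in τ ⁻¹' t, f (τ x) ∂P = ∫ x in t, f x ∂P :=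
        hτ.setIntegral_preimage_emb hτemb _ t
      rw [h1, h2, h3, h4]
    · refine StronglyMeasurable.aestronglyMeasurable ?_
      have : @Measurable Ω Ω (MeasurableSpace.comap τ C₀) C₀ τ := fun s hs => ⟨s, hs, rfl⟩
      exact (stronglyMeasurable_condExp (m := C₀)).comp_measurable (hmap0 ▸ this)
  -- abbreviations
  set μf : ℝ := ∫ x, f x ∂P with hμf
  -- membership in L²
  have hg0 : MemLp (P[f|C₀]) 2 P := memL2_condexp hC₀ hf
  have hg1 : MemLp (P[f|C₁]) 2 P := memL2_condexp hC₁ hf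
  have hg2 : MemLp (P[f|C₀ ⊔ C₁]) 2 P := memL2_condexp hm hf
  have ha2 : MemLp (fun ω => (P[f|C₀]) ω - μf) 2 P := hg0.sub (memLp_const μf)
  have hb2 : MemLp (fun ω => (P[f|C₁]) ω - μf) 2 P := hg1.sub (memLp_const μf)
  have hh2 : MemLp (fun ω => (P[f|C₀ ⊔ C₁]) ω - μf) 2 P := hg2.sub (memLp_const μf)
  have hq2 : MemLp (fun ω => f ω - μf) 2 P := hf.sub (memLp_const μf)
  -- strong measurability of centered condexps
  have ha_sm : StronglyMeasurable[C₀] (fun ω => (P[f|C₀]) ω - μf) :=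
    stronglyMeasurable_condExp.sub stronglyMeasurable_const
  have hb_sm : StronglyMeasurable[C₁] (fun ω => (P[f|C₁]) ω - μf) :=
    stronglyMeasurable_condExp.sub stronglyMeasurable_const
  have hh_sm : StronglyMeasurable[C₀ ⊔ C₁] (fun ω => (P[f|C₀ ⊔ C₁]) ω - μf) :=
    stronglyMeasurable_condExp.sub stronglyMeasurable_const
  -- condexp of centered functions
  have hcen : ∀ (m' : MeasurableSpace Ω), m' ≤ m0 →
      P[fun ω => f ω - μf|m'] =ᵐ[P] fun ω => (P[f|m']) ω - μf := by
    intro m' hm'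
    have h1 : P[f - (fun _ => μf)|m'] =ᵐ[P] P[f|m'] - P[(fun _ : Ω => μf)|m'] :=
      condExp_sub hfi (integrable_const μf) m'
    have h2 : P[(fun _ : Ω => μf)|m'] = fun _ => μf := condExp_const hm' μf
    refine h1.mono fun ω hω => ?_
    simpa [h2, Pi.sub_def] using hω
  -- tower: P[h | C₀] = a and P[h | C₁] = b
  have htow0 : P[fun ω => (P[f|C₀ ⊔ C₁]) ω - μf|C₀] =ᵐ[P] fun ω => (P[f|C₀]) ω - μf := by
    have h1 : P[(P[f|C₀ ⊔ C₁]) - (fun _ => μf)|C₀]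
        =ᵐ[P] P[P[f|C₀ ⊔ C₁]|C₀] - P[(fun _ : Ω => μf)|C₀] :=
      condExp_sub integrable_condExp (integrable_const μf) C₀
    have h2 : P[P[f|C₀ ⊔ C₁]|C₀] =ᵐ[P] P[f|C₀] := condExp_condExp_of_le le_sup_left hm
    have h3 : P[(fun _ : Ω => μf)|C₀] = fun _ => μf := condExp_const hC₀ μf
    filter_upwards [h1, h2] with ω hω1 hω2
    simpa [h3, hω2, Pi.sub_def] using hω1
  have htow1 : P[fun ω => (P[f|C₀ ⊔ C₁]) ω - μf|C₁] =ᵐ[P] fun ω => (P[f|C₁]) ω - μf := by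
    have h1 : P[(P[f|C₀ ⊔ C₁]) - (fun _ => μf)|C₁]
        =ᵐ[P] P[P[f|C₀ ⊔ C₁]|C₁] - P[(fun _ : Ω => μf)|C₁] :=
      condExp_sub integrable_condExp (integrable_const μf) C₁
    have h2 : P[P[f|C₀ ⊔ C₁]|C₁] =ᵐ[P] P[f|C₁] := condExp_condExp_of_le le_sup_right hm
    have h3 : P[(fun _ : Ω => μf)|C₁] = fun _ => μf := condExp_const hC₁ μf
    filter_upwards [h1, h2] with ω hω1 hω2
    simpa [h3, hω2, Pi.sub_def] using hω1
  -- part 2 : orthogonality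
  have hb0 : P[fun ω => (P[f|C₁]) ω - μf|C₀] =ᵐ[P] fun _ => (0:ℝ) := by
    have h1 : P[fun ω => (P[f|C₁]) ω - μf|C₀] =ᵐ[P] fun _ => ∫ ω, ((P[f|C₁]) ω - μf) ∂P :=
      condExp_indep_eq hC₁ hC₀ hb_sm hindep.symm
    have h2 : ∫ ω, ((P[f|C₁]) ω - μf) ∂P = 0 := by
      rw [integral_sub integrable_condExp (integrable_const μf), integral_condExp hC₁,
        integral_const]
      simp [hμf]
    refine h1.mono fun ω hω => ?_
    rw [hω, h2]
  have horth : ∫ ω, ((P[f|C₀]) ω - μf) * ((P[f|C₁]) ω - μf) ∂P = 0 := by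
    have hab : Integrable (fun ω => ((P[f|C₀]) ω - μf) * ((P[f|C₁]) ω - μf)) P :=
      mul_int_of_memL2 ha2 hb2
    have h1 : ∫ ω, ((P[f|C₀]) ω - μf) * ((P[f|C₁]) ω - μf) ∂P
        = ∫ ω, (P[fun ω => ((P[f|C₀]) ω - μf) * ((P[f|C₁]) ω - μf)|C₀]) ω ∂P :=
      (integral_condExp hC₀).symm
    have h2 : P[fun ω => ((P[f|C₀]) ω - μf) * ((P[f|C₁]) ω - μf)|C₀]
        =ᵐ[P] fun ω => ((P[f|C₀]) ω - μf) * (P[fun ω => (P[f|C₁]) ω - μf|C₀]) ω :=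
      condExp_mul_of_stronglyMeasurable_left ha_sm hab (hb2.integrable one_le_two)
    have h3 : (fun ω => ((P[f|C₀]) ω - μf) * (P[fun ω => (P[f|C₁]) ω - μf|C₀]) ω)
        =ᵐ[P] fun _ => (0:ℝ) := by
      filter_upwards [hb0] with ω hω
      simp [hω]
    rw [h1, integral_congr_ae (h2.trans h3), integral_zero]
  -- equal second moments via τ
  have hAB : ∫ ω, ((P[f|C₁]) ω - μf) * ((P[f|C₁]) ω - μf) ∂P
      = ∫ ω, ((P[f|C₀]) ω - μf) * ((P[f|C₀]) ω - μf) ∂P := by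
    have h1 : ∫ ω, ((P[f|C₁]) ω - μf) * ((P[f|C₁]) ω - μf) ∂P
        = ∫ ω, ((P[f|C₀]) (τ ω) - μf) * ((P[f|C₀]) (τ ω) - μf) ∂P := by
      refine integral_congr_ae ?_
      filter_upwards [hkey] with ω hω
      rw [hω]
    rw [h1]
    exact hτ.integral_comp hτemb (fun x => ((P[f|C₀]) x - μf) * ((P[f|C₀]) x - μf))
  have hG01 : ∫ ω, (P[f|C₁]) ω * (P[f|C₁]) ω ∂P = ∫ ω, (P[f|C₀]) ω * (P[f|C₀]) ω ∂P := by
    have h1 : ∫ ω, (P[f|C₁]) ω * (P[f|C₁]) ω ∂P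
        = ∫ ω, (P[f|C₀]) (τ ω) * (P[f|C₀]) (τ ω) ∂P := by
      refine integral_congr_ae ?_
      filter_upwards [hkey] with ω hω
      rw [hω]
    rw [h1]
    exact hτ.integral_comp hτemb (fun x => (P[f|C₀]) x * (P[f|C₀]) x)
  -- inner products with h
  have hha : ∫ ω, ((P[f|C₀]) ω - μf) * ((P[f|C₀ ⊔ C₁]) ω - μf) ∂P
      = ∫ ω, ((P[f|C₀]) ω - μf) * ((P[f|C₀]) ω - μf) ∂P :=
    inner_proj_eq P hC₀ ha_sm htow0 (mul_int_of_memL2 ha2 hh2) (hh2.integrable one_le_two)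
  have hhb : ∫ ω, ((P[f|C₁]) ω - μf) * ((P[f|C₀ ⊔ C₁]) ω - μf) ∂P
      = ∫ ω, ((P[f|C₁]) ω - μf) * ((P[f|C₁]) ω - μf) ∂P :=
    inner_proj_eq P hC₁ hb_sm htow1 (mul_int_of_memL2 hb2 hh2) (hh2.integrable one_le_two)
  have hhq : ∫ ω, ((P[f|C₀ ⊔ C₁]) ω - μf) * (f ω - μf) ∂P
      = ∫ ω, ((P[f|C₀ ⊔ C₁]) ω - μf) * ((P[f|C₀ ⊔ C₁]) ω - μf) ∂P :=
    inner_proj_eq P hm hh_sm (hcen _ hm) (mul_int_of_memL2 hh2 hq2) (hq2.integrable one_le_two)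
  -- H ≤ Q
  have hHQ : ∫ ω, ((P[f|C₀ ⊔ C₁]) ω - μf) * ((P[f|C₀ ⊔ C₁]) ω - μf) ∂P
      ≤ ∫ ω, (f ω - μf) * (f ω - μf) ∂P :=
    sq_int_le hh2 hq2 hhq
  -- 2A ≤ H
  have h2AH : (∫ ω, ((P[f|C₀]) ω - μf) * ((P[f|C₀]) ω - μf) ∂P)
      + (∫ ω, ((P[f|C₁]) ω - μf) * ((P[f|C₁]) ω - μf) ∂P)
      ≤ ∫ ω, ((P[f|C₀ ⊔ C₁]) ω - μf) * ((P[f|C₀ ⊔ C₁]) ω - μf) ∂P := by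
    set a : Ω → ℝ := fun ω => (P[f|C₀]) ω - μf with ha_def
    set b : Ω → ℝ := fun ω => (P[f|C₁]) ω - μf with hb_def
    set h : Ω → ℝ := fun ω => (P[f|C₀ ⊔ C₁]) ω - μf with hh_def
    have hab2 : MemLp (fun ω => a ω + b ω) 2 P := ha2.add hb2
    have haa := mul_int_of_memL2 ha2 ha2
    have hbb := mul_int_of_memL2 hb2 hb2
    have habi := mul_int_of_memL2 ha2 hb2
    have hah := mul_int_of_memL2 ha2 hh2
    have hbh := mul_int_of_memL2 hb2 hh2
    have huv : ∫ ω, (a ω + b ω) * h ω ∂P = ∫ ω, (a ω + b ω) * (a ω + b ω) ∂P := by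
      have e1 : (fun ω => (a ω + b ω) * h ω) = fun ω => a ω * h ω + b ω * h ω := by
        funext ω; ring
      have e2 : (fun ω => (a ω + b ω) * (a ω + b ω))
          = fun ω => (a ω * a ω + a ω * b ω) + (a ω * b ω + b ω * b ω) := by
        funext ω; ring
      have hp1 : Integrable (fun ω => a ω * a ω + a ω * b ω) P := haa.add habi
      have hp2 : Integrable (fun ω => a ω * b ω + b ω * b ω) P := habi.add hbb
      rw [e1, e2, integral_add hah hbh, integral_add hp1 hp2,
        integral_add haa habi, integral_add habi hbb, hha, hhb, horth]
      ring
    have := sq_int_le hab2 hh2 huv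
    have e3 : (fun ω => (a ω + b ω) * (a ω + b ω))
        = fun ω => (a ω * a ω + a ω * b ω) + (a ω * b ω + b ω * b ω) := by
      funext ω; ring
    have hp1 : Integrable (fun ω => a ω * a ω + a ω * b ω) P := haa.add habi
    have hp2 : Integrable (fun ω => a ω * b ω + b ω * b ω) P := habi.add hbb
    rw [e3, integral_add hp1 hp2, integral_add haa habi,
      integral_add habi hbb, horth] at this
    linarith
  -- nonnegativity
  have hHnn : (0:ℝ) ≤ ∫ ω, ((P[f|C₀ ⊔ C₁]) ω - μf) * ((P[f|C₀ ⊔ C₁]) ω - μf) ∂P :=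
    integral_nonneg fun ω => mul_self_nonneg _
  -- conclude
  refine ⟨?_, horth, ?_, ?_, ?_⟩
  · rw [elp_two_eq hg0, elp_two_eq hg1, hG01]
  · rw [elp_two_eq ha2, elp_two_eq hh2]
    exact half_bound hHnn (by linarith)
  · rw [elp_two_eq hb2, elp_two_eq hh2]
    exact half_bound hHnn (by linarith)
  · rw [elp_two_eq hh2, elp_two_eq hq2]
    exact ENNReal.ofReal_le_ofReal (Real.sqrt_le_sqrt hHQ)
end

section
/- Let (Ω, F, P) be a probability space with F = ⊗_{ω ∈ Ω_k} B_ω a product (the B_ω are jointly independent sub-σ-algebras generating F, indexed by a finite set Ω_k). Let V be a closed subspace of L²(F). For Δ ⊆ Ω_k write L²(Δ) = L²(⋁_{ω∈Δ} B_ω). If V ⊆ L²(Δ) and V ⊆ L²(Δ'), then V ⊆ L²(Δ ∩ Δ'). Consequently there exists a unique smallest subset Δ₀ ⊆ Ω_k with V ⊆ L²(Δ₀). -/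
open MeasureTheory ProbabilityTheory

theorem setIntegral_of_indep {Ω : Type*} {ma mb m0 : MeasurableSpace Ω}
    (hma : ma ≤ m0) (hmb : mb ≤ m0) (P : Measure Ω) [IsProbabilityMeasure P]
    (h : Indep ma mb P) {f : Ω → ℝ} (hf : Integrable f P)
    (hfm : AEStronglyMeasurable[ma] f P) {s : Set Ω} (hs : MeasurableSet[mb] s) :
    ∫ x in s, f x ∂P = (P s).toReal • ∫ x, f x ∂P := by
  haveI : SigmaFinite (P.trim hmb) := inferInstance
  have h1 : ∫ x in s, f x ∂P = ∫ x in s, (P[f|mb]) x ∂P := (setIntegral_condExp hmb hf hs).symm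
  have h2 : P[f|mb] =ᵐ[P] P[hfm.mk f|mb] := condExp_congr_ae hfm.ae_eq_mk
  have h3 : P[hfm.mk f|mb] =ᵐ[P] fun _ => ∫ x, hfm.mk f x ∂P :=
    condExp_indep_eq hma hmb hfm.stronglyMeasurable_mk h
  rw [h1, setIntegral_congr_ae (hmb s hs) ((h2.trans h3).mono fun x hx _ => hx)]
  rw [setIntegral_const, integral_congr_ae hfm.ae_eq_mk, Measure.real]

theorem key_aux {Ω ι : Type*} {mΔ mΔ' mI mD m0 : MeasurableSpace Ω}
    (P : Measure Ω) [IsProbabilityMeasure P]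
    (B : ι → MeasurableSpace Ω) (hle : ∀ i, B i ≤ m0)
    (hindep : ProbabilityTheory.iIndep B P)
    (Δ Δ' : Set ι)
    (hΔd : mΔ = ⨆ i ∈ Δ, B i) (hΔ'd : mΔ' = ⨆ i ∈ Δ', B i)
    (hId : mI = ⨆ i ∈ Δ ∩ Δ', B i) (hDd : mD = ⨆ i ∈ Δ' \ Δ, B i)
    {f : Ω → ℝ} (hf : Integrable f P)
    (h1 : AEStronglyMeasurable[mΔ] f P)
    (h2 : AEStronglyMeasurable[mΔ'] f P) :
    AEStronglyMeasurable[mI] f P := by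
  classical
  have hmΔ : mΔ ≤ m0 := hΔd.trans_le (iSup₂_le fun i _ => hle i)
  have hmΔ' : mΔ' ≤ m0 := hΔ'd.trans_le (iSup₂_le fun i _ => hle i)
  have hmI : mI ≤ m0 := hId.trans_le (iSup₂_le fun i _ => hle i)
  have hmD : mD ≤ m0 := hDd.trans_le (iSup₂_le fun i _ => hle i)
  have hmIΔ : mI ≤ mΔ := by
    rw [hId, hΔd]
    exact iSup₂_le fun i hi => le_iSup₂ (f := fun i (_ : i ∈ Δ) => B i) i hi.1
  have hmIΔ' : mI ≤ mΔ' := by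
    rw [hId, hΔ'd]
    exact iSup₂_le fun i hi => le_iSup₂ (f := fun i (_ : i ∈ Δ') => B i) i hi.2
  haveI : SigmaFinite (P.trim hmI) := inferInstance
  haveI : SigmaFinite (P.trim hmΔ') := inferInstance
  set g := P[f|mI] with hgdef
  have hgint : Integrable g P := integrable_condExp
  set π : Set (Set Ω) := piiUnionInter (fun n => { s | MeasurableSet[B n] s }) Δ' with hπdef
  have hgen : mΔ' = MeasurableSpace.generateFrom π := by
    rw [hΔ'd]; exact (generateFrom_piiUnionInter_measurableSet B Δ').symm
  have hpi : IsPiSystem π :=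
    isPiSystem_piiUnionInter _ (fun n => @MeasurableSpace.isPiSystem_measurableSet Ω (B n)) _
  have hIndepΔD : Indep mΔ mD P := by
    rw [hΔd, hDd]
    exact indep_iSup_of_disjoint hle hindep disjoint_sdiff_self_right
  have hIndepID : Indep mI mD P := indep_of_indep_of_le_left hIndepΔD hmIΔ
  have hC : ∀ t : Set Ω, MeasurableSet[mΔ'] t → ∫ x in t, f x ∂P = ∫ x in t, g x ∂P := by
    intro t ht
    refine MeasurableSpace.induction_on_inter (m := mΔ')
      (C := fun t _ => ∫ x in t, f x ∂P = ∫ x in t, g x ∂P) hgen hpi ?_ ?_ ?_ ?_ t ht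
    · simp
    · rintro u ⟨tf, htf, sf, hsf, rfl⟩
      set s₁ : Set Ω := ⋂ x ∈ tf.filter (· ∈ Δ), sf x with hs₁def
      set s₂ : Set Ω := ⋂ x ∈ tf.filter (· ∉ Δ), sf x with hs₂def
      have hsplit : ⋂ x ∈ tf, sf x = s₁ ∩ s₂ := by
        rw [hs₁def, hs₂def]
        ext x
        simp only [Set.mem_iInter, Set.mem_inter_iff, Finset.mem_filter]
        constructor
        · intro h; exact ⟨fun i hi => h i hi.1, fun i hi => h i hi.1⟩
        · intro h i hi
          by_cases hiΔ : i ∈ Δ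
          · exact h.1 i ⟨hi, hiΔ⟩
          · exact h.2 i ⟨hi, hiΔ⟩
      have hs₁I : MeasurableSet[mI] s₁ := by
        refine Finset.measurableSet_biInter _ fun i hi => ?_
        rw [Finset.mem_filter] at hi
        have hiI : i ∈ Δ ∩ Δ' := ⟨hi.2, htf hi.1⟩
        rw [hId]
        exact le_iSup₂ (f := fun i (_ : i ∈ Δ ∩ Δ') => B i) i hiI _ (hsf i hi.1)
      have hs₂D : MeasurableSet[mD] s₂ := by
        refine Finset.measurableSet_biInter _ fun i hi => ?_
        rw [Finset.mem_filter] at hi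
        have hiD : i ∈ Δ' \ Δ := ⟨htf hi.1, hi.2⟩
        rw [hDd]
        exact le_iSup₂ (f := fun i (_ : i ∈ Δ' \ Δ) => B i) i hiD _ (hsf i hi.1)
      have hs₁0 : MeasurableSet[m0] s₁ := hmI _ hs₁I
      have hfInd : AEStronglyMeasurable[mΔ] (s₁.indicator f) P := by
        refine ⟨s₁.indicator (h1.mk f), h1.stronglyMeasurable_mk.indicator (hmIΔ _ hs₁I), ?_⟩
        filter_upwards [h1.ae_eq_mk] with x hx
        by_cases hxs : x ∈ s₁ <;> simp [Set.indicator, hxs, hx]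
      have hgInd : AEStronglyMeasurable[mI] (s₁.indicator g) P :=
        ⟨s₁.indicator g, stronglyMeasurable_condExp.indicator hs₁I, Filter.EventuallyEq.rfl⟩
      have hfi : Integrable (s₁.indicator f) P := hf.indicator hs₁0
      have hgi : Integrable (s₁.indicator g) P := hgint.indicator hs₁0
      have e1 : ∫ x in s₂, s₁.indicator f x ∂P = (P s₂).toReal • ∫ x, s₁.indicator f x ∂P :=
        setIntegral_of_indep hmΔ hmD P hIndepΔD hfi hfInd hs₂D
      have e2 : ∫ x in s₂, s₁.indicator g x ∂P = (P s₂).toReal • ∫ x, s₁.indicator g x ∂P :=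
        setIntegral_of_indep hmI hmD P hIndepID hgi hgInd hs₂D
      have e3 : ∫ x, s₁.indicator f x ∂P = ∫ x, s₁.indicator g x ∂P := by
        rw [integral_indicator hs₁0, integral_indicator hs₁0, hgdef,
          setIntegral_condExp hmI hf hs₁I]
      have e4 : ∀ h : Ω → ℝ, ∫ x in s₂, s₁.indicator h x ∂P = ∫ x in s₁ ∩ s₂, h x ∂P := by
        intro h
        rw [setIntegral_indicator hs₁0, Set.inter_comm]
      rw [hsplit, ← e4 f, ← e4 g, e1, e2, e3]
    · intro t htm hteq
      have ht0 : MeasurableSet[m0] t := hmΔ' _ htm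
      have hf2 := integral_add_compl ht0 hf
      have hg2 := integral_add_compl ht0 hgint
      have hfg : ∫ x, f x ∂P = ∫ x, g x ∂P := (integral_condExp hmI).symm
      linarith
    · intro u hdisj hum heq
      have hu0 : ∀ i, MeasurableSet[m0] (u i) := fun i => hmΔ' _ (hum i)
      have hf2 := hasSum_integral_iUnion hu0 hdisj hf.integrableOn
      have hg2 := hasSum_integral_iUnion hu0 hdisj hgint.integrableOn
      rw [show (fun i => ∫ x in u i, f x ∂P) = fun i => ∫ x in u i, g x ∂P
        from funext heq] at hf2
      exact hf2.unique hg2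
  have hfg : f =ᵐ[P] g := by
    have hfc : f =ᵐ[P] P[f|mΔ'] := (condExp_of_aestronglyMeasurable' hmΔ' h2 hf).symm
    have hgc : g =ᵐ[P] P[f|mΔ'] := by
      refine ae_eq_condExp_of_forall_setIntegral_eq hmΔ' hf
        (fun s _ _ => hgint.integrableOn) (fun s hs _ => (hC s hs).symm) ?_
      exact ⟨g, stronglyMeasurable_condExp.mono hmIΔ', Filter.EventuallyEq.rfl⟩
    exact hfc.trans hgc.symm
  exact (stronglyMeasurable_condExp.aestronglyMeasurable).congr hfg.symm

theorem sInter_aux {α : Type*} (p : Set α → Prop) (htop : p Set.univ)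
    (hinf : ∀ s t, p s → p t → p (s ∩ t)) (s : Finset (Set α)) (hs : ∀ t ∈ s, p t) :
    p (⋂₀ ↑s) := by
  classical
  induction s using Finset.induction_on with
  | empty => simpa using htop
  | @insert a u _ ih =>
    rw [Finset.coe_insert, Set.sInter_insert]
    exact hinf _ _ (hs a (Finset.mem_insert_self a u))
      (ih fun t ht => hs t (Finset.mem_insert_of_mem ht))

theorem smallest_support_set_of_independent_factors
    {Ω ι : Type*} [Fintype ι] {m0 : MeasurableSpace Ω}
    (P : Measure Ω) [IsProbabilityMeasure P]
    (B : ι → MeasurableSpace Ω) (hle : ∀ i, B i ≤ m0)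
    (hgen : (⨆ i, B i) = m0)
    (hindep : ProbabilityTheory.iIndep B P)
    (V : Set (Ω → ℝ)) (hV : ∀ f ∈ V, MemLp f 2 P)
    (Δ Δ' : Set ι)
    (hΔ : ∀ f ∈ V, AEStronglyMeasurable[⨆ i ∈ Δ, B i] f P)
    (hΔ' : ∀ f ∈ V, AEStronglyMeasurable[⨆ i ∈ Δ', B i] f P) :
    (∀ f ∈ V, AEStronglyMeasurable[⨆ i ∈ Δ ∩ Δ', B i] f P) ∧
    ∃ Δ₀ : Set ι,
      (∀ f ∈ V, AEStronglyMeasurable[⨆ i ∈ Δ₀, B i] f P) ∧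
      ∀ Δ₁ : Set ι, (∀ f ∈ V, AEStronglyMeasurable[⨆ i ∈ Δ₁, B i] f P) → Δ₀ ⊆ Δ₁ := by
  classical
  set p : Set ι → Prop := fun S => ∀ f ∈ V, AEStronglyMeasurable[⨆ i ∈ S, B i] f P with hpdef
  have hinf : ∀ S T, p S → p T → p (S ∩ T) := by
    intro S T hS hT f hf
    exact key_aux P B hle hindep S T rfl rfl rfl rfl ((hV f hf).integrable one_le_two)
      (hS f hf) (hT f hf)
  have htop : p Set.univ := by
    intro f hf
    obtain ⟨g, hg, hfg⟩ := (hV f hf).1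
    refine ⟨g, ?_, hfg⟩
    have : (⨆ i ∈ (Set.univ : Set ι), B i) = m0 := by rw [← hgen]; simp
    rw [this]
    exact hg
  refine ⟨hinf Δ Δ' hΔ hΔ', ?_⟩
  have hfin : (setOf p).Finite := Set.toFinite _
  refine ⟨⋂₀ setOf p, ?_, fun Δ₁ h₁ => Set.sInter_subset_of_mem h₁⟩
  have : ⋂₀ setOf p = ⋂₀ ↑hfin.toFinset := by rw [Set.Finite.coe_toFinset]
  rw [this]
  exact sInter_aux p htop hinf hfin.toFinset (fun t ht => hfin.mem_toFinset.mp ht)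
end

section
/- Let μ₁, μ₂, ν₁, ν₂ be probability measures on standard Borel spaces and let λ, λ₁, λ₂, π be probability measures on a product space X × Y₁ × Y₂ with the same one-dimensional marginals, where π = μ ⊗ ν₁ ⊗ ν₂ is the full product measure, λ₁ has the form (projection of λ to X × Y₁) ⊗ ν₂, and λ₂ = (projection of λ to X × Y₂) ⊗ ν₁ (with coordinates reordered appropriately). Suppose λ + π = λ₁ + λ₂ as measures, and suppose all four measures λ, π, λ₁, λ₂ are extreme points of the convex set of measures on X × Y₁ × Y₂ with the given marginals invariant under a fixed measurable transformation (i.e., they are ergodic joinings). Then λ = λ₁ or λ = λ₂. -/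
open MeasureTheory
open MeasureTheory Set Filter
open scoped NNReal ENNReal

lemma rnDeriv_comp_ae_eq' {α : Type*} [MeasurableSpace α] {S : α → α} {μ ρ : Measure α}
    [IsFiniteMeasure μ] [IsFiniteMeasure ρ]
    (hμ : MeasurePreserving S μ μ) (hρ : MeasurePreserving S ρ ρ) (hac : μ ≪ ρ) :
    (fun x => μ.rnDeriv ρ (S x)) =ᵐ[ρ] μ.rnDeriv ρ := by
  set h : α → ℝ≥0∞ := μ.rnDeriv ρ with hh
  have hmeas : Measurable h := Measure.measurable_rnDeriv μ ρ
  have hSm : Measurable S := hρ.measurable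
  have key : ∀ c : ℝ≥0,
      ρ ((h ⁻¹' Ioi (c : ℝ≥0∞)) \ S ⁻¹' (h ⁻¹' Ioi (c : ℝ≥0∞))) = 0 ∧
      ρ ((S ⁻¹' (h ⁻¹' Ioi (c : ℝ≥0∞))) \ h ⁻¹' Ioi (c : ℝ≥0∞)) = 0 := by
    intro c
    set E : Set α := h ⁻¹' Ioi (c : ℝ≥0∞) with hE
    have hEm : MeasurableSet E := hmeas measurableSet_Ioi
    set F : Set α := S ⁻¹' E with hF
    have hFm : MeasurableSet F := hSm hEm
    have hμEF : μ F = μ E := hμ.measure_preimage hEm.nullMeasurableSet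
    have hρEF : ρ F = ρ E := hρ.measure_preimage hEm.nullMeasurableSet
    have hdiffμ : μ (E \ F) = μ (F \ E) := by
      have h1 : μ (E \ F) + μ (E ∩ F) = μ E := measure_diff_add_inter E hFm
      have h2 : μ (F \ E) + μ (F ∩ E) = μ F := measure_diff_add_inter F hEm
      rw [Set.inter_comm] at h2
      rw [hμEF, ← h1] at h2
      exact ((ENNReal.add_left_inj (measure_ne_top μ _)).mp h2).symm
    have hdiffρ : ρ (E \ F) = ρ (F \ E) := by
      have h1 : ρ (E \ F) + ρ (E ∩ F) = ρ E := measure_diff_add_inter E hFm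
      have h2 : ρ (F \ E) + ρ (F ∩ E) = ρ F := measure_diff_add_inter F hEm
      rw [Set.inter_comm] at h2
      rw [hρEF, ← h1] at h2
      exact ((ENNReal.add_left_inj (measure_ne_top ρ _)).mp h2).symm
    -- integral identities
    have hI1 : μ (E \ F) = ∫⁻ x in E \ F, h x ∂ρ :=
      (Measure.setLIntegral_rnDeriv hac _).symm
    have hI2 : μ (F \ E) = ∫⁻ x in F \ E, h x ∂ρ :=
      (Measure.setLIntegral_rnDeriv hac _).symm
    -- upper bound on `F \ E`
    have hub : μ (F \ E) ≤ (c : ℝ≥0∞) * ρ (F \ E) := by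
      rw [hI2, ← setLIntegral_const (F \ E) (c : ℝ≥0∞)]
      refine setLIntegral_mono measurable_const fun x hx => ?_
      have : x ∉ E := hx.2
      simpa [hE, not_lt] using this
    -- lower bound decomposition on `E \ F`
    have hsplit : ∫⁻ x in E \ F, h x ∂ρ
        = (c : ℝ≥0∞) * ρ (E \ F) + ∫⁻ x in E \ F, (h x - c) ∂ρ := by
      rw [← setLIntegral_const (E \ F) (c : ℝ≥0∞), ← lintegral_add_left measurable_const]
      refine setLIntegral_congr_fun (hEm.diff hFm) (fun x hx => ?_)
      have : (c : ℝ≥0∞) < h x := hx.1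
      exact (add_tsub_cancel_of_le this.le).symm
    have hzero : ∫⁻ x in E \ F, (h x - c) ∂ρ = 0 := by
      have hle : (c : ℝ≥0∞) * ρ (E \ F) + ∫⁻ x in E \ F, (h x - c) ∂ρ
          ≤ (c : ℝ≥0∞) * ρ (E \ F) + 0 := by
        rw [add_zero, ← hsplit, ← hI1, hdiffμ, hdiffρ]
        exact hub
      have := (ENNReal.add_le_add_iff_left (by
        exact ENNReal.mul_ne_top ENNReal.coe_ne_top (measure_ne_top ρ _))).mp hle
      exact le_antisymm this (zero_le)
    have hEF0 : ρ (E \ F) = 0 := by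
      replace hzero := (lintegral_eq_zero_iff (f := fun x => h x - (c : ℝ≥0∞)) (hmeas.sub measurable_const)).mp hzero
      have h0 : ∀ᵐ x ∂(ρ.restrict (E \ F)), h x ≤ c := by
        filter_upwards [hzero] with x hx
        simpa [tsub_eq_zero_iff_le] using hx
      have h1 : ∀ᵐ x ∂(ρ.restrict (E \ F)), x ∈ E \ F :=
        ae_restrict_mem (hEm.diff hFm)
      have hfalse : ∀ᵐ (_ : α) ∂(ρ.restrict (E \ F)), False := by
        filter_upwards [h0, h1] with x hx hxm
        exact absurd hx (not_le.mpr hxm.1)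
      have := ae_iff.mp hfalse
      simpa [Measure.restrict_apply] using this
    exact ⟨hEF0, hdiffρ ▸ hEF0⟩
  -- combine over rational thresholds
  have hfin : ∀ᵐ x ∂ρ, h x < ∞ := Measure.rnDeriv_lt_top μ ρ
  have hfinS : ∀ᵐ x ∂ρ, h (S x) < ∞ := hρ.quasiMeasurePreserving.ae hfin
  have hall : ∀ᵐ x ∂ρ, ∀ q : ℚ,
      x ∉ (h ⁻¹' Ioi ((Real.toNNReal q : ℝ≥0) : ℝ≥0∞)) \
          S ⁻¹' (h ⁻¹' Ioi ((Real.toNNReal q : ℝ≥0) : ℝ≥0∞)) ∧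
      x ∉ (S ⁻¹' (h ⁻¹' Ioi ((Real.toNNReal q : ℝ≥0) : ℝ≥0∞))) \
          h ⁻¹' Ioi ((Real.toNNReal q : ℝ≥0) : ℝ≥0∞) := by
    rw [ae_all_iff]
    intro q
    have hk := key (Real.toNNReal q)
    rw [eventually_and]
    exact ⟨measure_eq_zero_iff_ae_notMem.mp hk.1, measure_eq_zero_iff_ae_notMem.mp hk.2⟩
  filter_upwards [hall, hfin, hfinS] with x hx hx1 hx2
  by_contra hne
  rcases lt_or_gt_of_ne hne with hlt | hlt
  · -- h (S x) < h x
    obtain ⟨q, hq0, hq1, hq2⟩ := ENNReal.lt_iff_exists_rat_btwn.mp hlt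
    refine (hx q).1 ⟨hq2, fun hmem => ?_⟩
    exact absurd (show ((Real.toNNReal q : ℝ≥0) : ℝ≥0∞) < h (S x) from hmem) (not_lt.mpr hq1.le)
  · -- h x < h (S x)
    obtain ⟨q, hq0, hq1, hq2⟩ := ENNReal.lt_iff_exists_rat_btwn.mp hlt
    refine (hx q).2 ⟨hq2, fun hmem => ?_⟩
    exact absurd (show ((Real.toNNReal q : ℝ≥0) : ℝ≥0∞) < h x from hmem) (not_lt.mpr hq1.le)


lemma prob_eq_of_le' {α : Type*} [MeasurableSpace α] {μ ν : Measure α}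
    [IsProbabilityMeasure μ] [IsProbabilityMeasure ν] (h : μ ≤ ν) : μ = ν := by
  ext s hs
  by_contra hne
  have hlt : μ s < ν s := lt_of_le_of_ne (Measure.le_iff'.mp h s) hne
  have h2 : μ sᶜ ≤ ν sᶜ := Measure.le_iff'.mp h sᶜ
  have : (1 : ℝ≥0∞) < 1 := by
    calc (1 : ℝ≥0∞) = μ s + μ sᶜ := by
          rw [measure_add_measure_compl hs, measure_univ]
    _ ≤ μ s + ν sᶜ := by gcongr
    _ < ν s + ν sᶜ := ENNReal.add_lt_add_right (measure_ne_top _ _) hlt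
    _ = 1 := by rw [measure_add_measure_compl hs, measure_univ]
  exact lt_irrefl _ this

lemma ergodic_eq_or_mutuallySingular' {α : Type*} [MeasurableSpace α] {S : α → α}
    {μ ν : Measure α} [IsProbabilityMeasure μ] [IsProbabilityMeasure ν]
    (hμ : Ergodic S μ) (hν : Ergodic S ν) : μ = ν ∨ μ ⟂ₘ ν := by
  set ρ : Measure α := μ + ν with hρdef
  have hSm : Measurable S := hμ.toMeasurePreserving.measurable
  have hρ : MeasurePreserving S ρ ρ :=
    ⟨hSm, by rw [hρdef, Measure.map_add _ _ hSm, hμ.toMeasurePreserving.map_eq,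
      hν.toMeasurePreserving.map_eq]⟩
  have hacμ : μ ≪ ρ := Measure.absolutelyContinuous_of_le (Measure.le_add_right le_rfl)
  have hacν : ν ≪ ρ := Measure.absolutelyContinuous_of_le (Measure.le_add_left le_rfl)
  set h : α → ℝ≥0∞ := μ.rnDeriv ρ with hh
  have hmeas : Measurable h := Measure.measurable_rnDeriv μ ρ
  have hinv : (fun x => h (S x)) =ᵐ[ρ] h :=
    rnDeriv_comp_ae_eq' hμ.toMeasurePreserving hρ hacμ
  set E : Set α := h ⁻¹' Set.Ioi (1/2 : ℝ≥0∞) with hE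
  have hEm : MeasurableSet E := hmeas measurableSet_Ioi
  have hinvE : S ⁻¹' E =ᵐ[ρ] E := by
    rw [Filter.eventuallyEq_set]
    filter_upwards [hinv] with x hx
    simp only [Set.mem_preimage, hE, Set.mem_Ioi, hx]
  have hinvEμ : S ⁻¹' E =ᵐ[μ] E := hacμ.ae_eq hinvE
  have hinvEν : S ⁻¹' E =ᵐ[ν] E := hacν.ae_eq hinvE
  have hμE : μ E = 0 ∨ μ Eᶜ = 0 := by
    rcases hμ.quasiErgodic.ae_empty_or_univ₀ hEm.nullMeasurableSet hinvEμ with h1 | h1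
    · exact Or.inl (by simpa using measure_congr h1)
    · right
      have := measure_congr h1
      simp only [measure_univ] at this
      rw [← prob_compl_eq_zero_iff hEm] at this
      exact this
  have hνE : ν E = 0 ∨ ν Eᶜ = 0 := by
    rcases hν.quasiErgodic.ae_empty_or_univ₀ hEm.nullMeasurableSet hinvEν with h1 | h1
    · exact Or.inl (by simpa using measure_congr h1)
    · right
      have := measure_congr h1
      simp only [measure_univ] at this
      rw [← prob_compl_eq_zero_iff hEm] at this
      exact this
  have hIdent : ∀ s : Set α, μ s = ∫⁻ x in s, h x ∂ρ :=
    fun s => (Measure.setLIntegral_rnDeriv hacμ s).symm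
  have htwo0 : (2 : ℝ≥0∞) ≠ 0 := by norm_num
  have htwoT : (2 : ℝ≥0∞) ≠ ⊤ := ENNReal.ofNat_ne_top
  rcases hμE with hμE0 | hμEc0
  · -- h ≤ 1/2 a.e., so μ ≤ ν, so μ = ν
    left
    have hρE : ρ E = 0 := by
      have h0 : μ E = ∫⁻ x in E, h x ∂ρ := hIdent E
      have hlow : (1/2 : ℝ≥0∞) * ρ E ≤ μ E := by
        rw [h0, ← setLIntegral_const E (1/2 : ℝ≥0∞)]
        exact setLIntegral_mono hmeas fun x hx => (le_of_lt hx)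
      rw [hμE0] at hlow
      have h00 : (1/2 : ℝ≥0∞) * ρ E = 0 := le_antisymm hlow (zero_le)
      rcases mul_eq_zero.mp h00 with hc | hc
      · exfalso; norm_num at hc
      · exact hc
    have hle : ∀ᵐ x ∂ρ, h x ≤ 1/2 := by
      have hnm : ∀ᵐ x ∂ρ, x ∉ E := measure_eq_zero_iff_ae_notMem.mp hρE
      filter_upwards [hnm] with x hx
      simpa [hE, not_lt] using hx
    refine prob_eq_of_le' (Measure.le_iff'.mpr fun s => ?_)
    have h1 : μ s = ∫⁻ x in s, h x ∂ρ := hIdent s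
    have h2 : ∫⁻ x in s, h x ∂ρ ≤ (1/2) * ρ s := by
      rw [← setLIntegral_const s (1/2 : ℝ≥0∞)]
      exact setLIntegral_mono_ae measurable_const.aemeasurable
        (hle.mono fun x hx => fun _ => hx)
    have h3 : μ s + μ s ≤ μ s + ν s := by
      calc μ s + μ s = 2 * μ s := (two_mul _).symm
      _ ≤ 2 * ((1/2) * ρ s) := mul_le_mul_right (h1 ▸ h2) 2
      _ = ρ s := by
          rw [← mul_assoc, one_div, ENNReal.mul_inv_cancel htwo0 htwoT, one_mul]
      _ = μ s + ν s := by simp [hρdef]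
    exact ENNReal.le_of_add_le_add_left (measure_ne_top μ s) h3
  · rcases hνE with hνE0 | hνEc0
    · right
      exact ⟨Eᶜ, hEm.compl, hμEc0, by simpa using hνE0⟩
    · left
      have hρEc : ρ Eᶜ = 0 := by
        simp [hρdef, hμEc0, hνEc0]
      have hge : ∀ᵐ x ∂ρ, (1/2 : ℝ≥0∞) ≤ h x := by
        have hm : ∀ᵐ x ∂ρ, x ∈ E := by
          have := measure_eq_zero_iff_ae_notMem.mp hρEc
          filter_upwards [this] with x hx
          simpa using hx
        filter_upwards [hm] with x hx
        exact le_of_lt hx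
      refine (prob_eq_of_le' (Measure.le_iff'.mpr fun s => ?_)).symm
      have h1 : μ s = ∫⁻ x in s, h x ∂ρ := hIdent s
      have h2 : (1/2 : ℝ≥0∞) * ρ s ≤ ∫⁻ x in s, h x ∂ρ := by
        rw [← setLIntegral_const s (1/2 : ℝ≥0∞)]
        exact setLIntegral_mono_ae hmeas.aemeasurable
          (hge.mono fun x hx => fun _ => hx)
      have h3 : μ s + ν s ≤ μ s + μ s := by
        calc μ s + ν s = ρ s := by simp [hρdef]
        _ = 2 * ((1/2) * ρ s) := by
            rw [← mul_assoc, one_div, ENNReal.mul_inv_cancel htwo0 htwoT, one_mul]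
        _ ≤ 2 * μ s := mul_le_mul_right (h1 ▸ h2) 2
        _ = μ s + μ s := two_mul _
      exact ENNReal.le_of_add_le_add_left (measure_ne_top μ s) h3


theorem ergodic_joining_sum_decomposition
    {X Y₁ Y₂ : Type*} [MeasurableSpace X] [MeasurableSpace Y₁] [MeasurableSpace Y₂]
    (μ : Measure X) (ν₁ : Measure Y₁) (ν₂ : Measure Y₂)
    [IsProbabilityMeasure μ] [IsProbabilityMeasure ν₁] [IsProbabilityMeasure ν₂]
    (lam : Measure (X × Y₁ × Y₂)) [IsProbabilityMeasure lam]
    (hm0 : lam.map (fun p => p.1) = μ)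
    (hm1 : lam.map (fun p => p.2.1) = ν₁)
    (hm2 : lam.map (fun p => p.2.2) = ν₂)
    (S : X × Y₁ × Y₂ → X × Y₁ × Y₂)
    (lam₁ lam₂ π : Measure (X × Y₁ × Y₂))
    (hπ : π = μ.prod (ν₁.prod ν₂))
    (hlam₁ : lam₁ = Measure.map (fun q : (X × Y₁) × Y₂ => (q.1.1, q.1.2, q.2))
      ((lam.map fun p => (p.1, p.2.1)).prod ν₂))
    (hlam₂ : lam₂ = Measure.map (fun q : (X × Y₂) × Y₁ => (q.1.1, q.2, q.1.2))
      ((lam.map fun p => (p.1, p.2.2)).prod ν₁))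
    (herg : Ergodic S lam) (hergπ : Ergodic S π)
    (herg₁ : Ergodic S lam₁) (herg₂ : Ergodic S lam₂)
    (hsum : lam + π = lam₁ + lam₂) :
    lam = lam₁ ∨ lam = lam₂ := by
  have hprob₁ : IsProbabilityMeasure lam₁ := by
    rw [hlam₁]
    have i1 : IsProbabilityMeasure (lam.map fun p : X × Y₁ × Y₂ => (p.1, p.2.1)) :=
      Measure.isProbabilityMeasure_map (by fun_prop)
    exact Measure.isProbabilityMeasure_map (by fun_prop)
  have hprob₂ : IsProbabilityMeasure lam₂ := by
    rw [hlam₂]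
    have i1 : IsProbabilityMeasure (lam.map fun p : X × Y₁ × Y₂ => (p.1, p.2.2)) :=
      Measure.isProbabilityMeasure_map (by fun_prop)
    exact Measure.isProbabilityMeasure_map (by fun_prop)
  by_contra hcon
  push_neg at hcon
  obtain ⟨hne1, hne2⟩ := hcon
  have hs1 : lam ⟂ₘ lam₁ := (ergodic_eq_or_mutuallySingular' herg herg₁).resolve_left hne1
  have hs2 : lam ⟂ₘ lam₂ := (ergodic_eq_or_mutuallySingular' herg herg₂).resolve_left hne2
  obtain ⟨s₁, hms₁, hA, hB⟩ := hs1
  obtain ⟨s₂, hms₂, hC, hD⟩ := hs2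
  have hA0 : lam (s₁ᶜ ∩ s₂ᶜ) = 0 := by
    have h1 : (lam + π) (s₁ᶜ ∩ s₂ᶜ) = (lam₁ + lam₂) (s₁ᶜ ∩ s₂ᶜ) := by rw [hsum]
    have h2 : lam₁ (s₁ᶜ ∩ s₂ᶜ) = 0 := measure_mono_null Set.inter_subset_left hB
    have h3 : lam₂ (s₁ᶜ ∩ s₂ᶜ) = 0 := measure_mono_null Set.inter_subset_right hD
    simp only [Measure.add_apply, h2, h3, add_zero] at h1
    exact (add_eq_zero.mp h1).1
  have huniv : lam Set.univ = 0 := by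
    have hsub : (Set.univ : Set (X × Y₁ × Y₂)) ⊆ (s₁ᶜ ∩ s₂ᶜ) ∪ (s₁ ∪ s₂) := by
      intro x _
      by_cases h1 : x ∈ s₁ <;> by_cases h2 : x ∈ s₂ <;> simp [h1, h2]
    exact measure_mono_null hsub (measure_union_null hA0 (measure_union_null hA hC))
  simp at huniv
end

section
/- Let T and S be unitary operators on Hilbert spaces H and K respectively with a bounded operator Φ : H → K satisfying Φ ∘ T = S ∘ Φ and ‖Φ‖ ≤ 1. Then for every f ∈ H, the spectral measure of Φ(f) with respect to S is absolutely continuous with respect to the spectral measure of f with respect to T. -/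
open MeasureTheory

noncomputable instance : MeasurableSpace Circle := borel Circle
instance : BorelSpace Circle := ⟨rfl⟩

/-- `μ` is the spectral measure of the vector `v` for the unitary `U`:
its Fourier coefficients are `⟪Uⁿ v, v⟫`. -/
def IsSpectralMeasure {H : Type*} [NormedAddCommGroup H] [InnerProductSpace ℂ H]
    (U : H ≃ₗᵢ[ℂ] H) (v : H) (μ : Measure Circle) : Prop :=
  ∀ n : ℤ, (inner ℂ ((U ^ n) v) v : ℂ) = ∫ z : Circle, (z : ℂ) ^ n ∂μ

namespace SMhelper

lemma integrable {E : Type*} [NormedAddCommGroup E] [NormedSpace ℝ E]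
    (g : C(Circle, E)) (μ : Measure Circle) [IsFiniteMeasure μ] :
    Integrable g μ :=
  g.continuous.integrable_of_hasCompactSupport (HasCompactSupport.of_compactSpace g)

lemma integrable' {E : Type*} [NormedAddCommGroup E] [NormedSpace ℝ E]
    {g : Circle → E} (hg : Continuous g) (μ : Measure Circle) [IsFiniteMeasure μ] :
    Integrable g μ :=
  integrable ⟨g, hg⟩ μ

lemma coe_pow' (z : Circle) (n : ℕ) : ((z ^ n : Circle) : ℂ) = (z : ℂ) ^ n :=
  map_pow Circle.coeHom z n

lemma coe_zpow' (z : Circle) (n : ℤ) : ((z ^ n : Circle) : ℂ) = (z : ℂ) ^ n := by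
  rcases n with n | n
  · simpa using coe_pow' z n
  · simp only [zpow_negSucc, Circle.coe_inv, coe_pow']

lemma conj_zpow (z : Circle) (n : ℤ) : (starRingEnd ℂ) ((z : ℂ) ^ n) = (z : ℂ) ^ (-n) := by
  have : (starRingEnd ℂ) ((z:ℂ) ^ n) = (starRingEnd ℂ (z:ℂ)) ^ n := map_zpow₀ (starRingEnd ℂ) _ n
  rw [this, ← Circle.coe_inv_eq_conj, Circle.coe_inv, inv_zpow, ← zpow_neg]

noncomputable def chi (n : ℤ) : C(Circle, ℂ) :=
  ⟨fun z => (z : ℂ) ^ n, by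
    have : Continuous fun z : Circle => ((z ^ n : Circle) : ℂ) :=
      continuous_induced_dom.comp (continuous_zpow n)
    simpa [coe_zpow'] using this⟩

@[simp] lemma chi_apply (n : ℤ) (z : Circle) : chi n z = (z : ℂ) ^ n := rfl

lemma chi_mul (n m : ℤ) : chi n * chi m = chi (n + m) := by
  ext z; simp [← zpow_add₀ (Circle.coe_ne_zero z)]

lemma chi_zero : chi 0 = 1 := by ext z; simp

lemma star_chi (n : ℤ) : star (chi n) = chi (-n) := by
  ext z
  simp only [ContinuousMap.star_apply, chi_apply]
  exact conj_zpow z n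

noncomputable abbrev trigSpan : Submodule ℂ C(Circle, ℂ) := Submodule.span ℂ (Set.range chi)

lemma trigSpan_mul_mem {x y : C(Circle, ℂ)} (hx : x ∈ trigSpan) (hy : y ∈ trigSpan) :
    x * y ∈ trigSpan := by
  have h : trigSpan * trigSpan ≤ trigSpan := by
    rw [Submodule.span_mul_span]
    apply Submodule.span_mono
    rintro a ha
    rw [Set.mem_mul] at ha
    obtain ⟨x, hx, y, hy, rfl⟩ := ha
    obtain ⟨n, rfl⟩ := hx; obtain ⟨m, rfl⟩ := hy
    exact ⟨n + m, (chi_mul n m).symm⟩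
  exact h (Submodule.mul_mem_mul hx hy)

lemma trigSpan_star_mem {x : C(Circle, ℂ)} (hx : x ∈ trigSpan) : star x ∈ trigSpan := by
  induction hx using Submodule.span_induction with
  | mem x h => obtain ⟨n, rfl⟩ := h; rw [star_chi]; exact Submodule.subset_span ⟨-n, rfl⟩
  | zero => simpa using Submodule.zero_mem _
  | add x y _ _ hx hy => rw [star_add]; exact Submodule.add_mem _ hx hy
  | smul a x _ hx => rw [star_smul]; exact Submodule.smul_mem _ _ hx

lemma trigSpan_dense : Dense (trigSpan : Set C(Circle, ℂ)) := by
  have sep : (StarAlgebra.adjoin ℂ {chi 1} : StarSubalgebra ℂ C(Circle, ℂ)).SeparatesPoints := by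
    intro z w hzw
    refine ⟨_, ⟨chi 1, StarAlgebra.subset_adjoin ℂ _ (Set.mem_singleton _), rfl⟩, ?_⟩
    simpa using fun h => hzw (Subtype.coe_injective (by simpa using h))
  have htop := ContinuousMap.starSubalgebra_topologicalClosure_eq_top_of_separatesPoints
    (StarAlgebra.adjoin ℂ {chi 1}) sep
  have hsub : (StarAlgebra.adjoin ℂ {chi 1} : Set C(Circle, ℂ)) ⊆ trigSpan := by
    intro x hx
    induction hx using StarAlgebra.adjoin_induction with
    | mem x h => rw [Set.mem_singleton_iff] at h; subst h; exact Submodule.subset_span ⟨1, rfl⟩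
    | algebraMap c =>
        have : algebraMap ℂ C(Circle, ℂ) c = c • chi 0 := by
          rw [chi_zero, Algebra.algebraMap_eq_smul_one]
        rw [this]; exact Submodule.smul_mem _ _ (Submodule.subset_span ⟨0, rfl⟩)
    | add x y _ _ hx hy => exact Submodule.add_mem _ hx hy
    | mul x y _ _ hx hy => exact trigSpan_mul_mem hx hy
    | star x _ hx => exact trigSpan_star_mem hx
  have hcl : closure ((StarAlgebra.adjoin ℂ {chi 1} : StarSubalgebra ℂ C(Circle, ℂ)) :
      Set C(Circle, ℂ)) = Set.univ := by
    have h2 := congrArg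
      (fun (S : StarSubalgebra ℂ C(Circle, ℂ)) => (S : Set C(Circle, ℂ))) htop
    simpa [StarSubalgebra.topologicalClosure_coe] using h2
  exact (dense_iff_closure_eq.mpr hcl).mono hsub

variable {H K : Type*} [NormedAddCommGroup H] [InnerProductSpace ℂ H]
  [NormedAddCommGroup K] [InnerProductSpace ℂ K]

lemma inner_zpow (U : H ≃ₗᵢ[ℂ] H) (n m : ℤ) (v : H) :
    (inner ℂ ((U ^ n) v) ((U ^ m) v) : ℂ) = inner ℂ ((U ^ (n - m)) v) v := by
  have h : (U ^ n) v = (U ^ m) ((U ^ (n - m)) v) := by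
    have : U ^ n = U ^ m * U ^ (n - m) := by rw [← zpow_add]; ring_nf
    rw [this]; rfl
  rw [h, LinearIsometryEquiv.inner_map_map]

lemma spec_norm (U : H ≃ₗᵢ[ℂ] H) (v : H) (μ : Measure Circle) [IsFiniteMeasure μ]
    (hμ : IsSpectralMeasure U v μ) (c : ℤ →₀ ℂ) :
    ∫ z : Circle, ‖∑ n ∈ c.support, c n * (z : ℂ) ^ (-n)‖ ^ 2 ∂μ
      = ‖∑ n ∈ c.support, c n • (U ^ n) v‖ ^ 2 := by
  set s := c.support with hs
  set w := ∑ n ∈ s, c n • (U ^ n) v with hw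
  have int_chi : ∀ k : ℤ, Integrable (fun z : Circle => (z : ℂ) ^ k) μ := fun k =>
    SMhelper.integrable (chi k) μ
  have key : ∫ z : Circle, ((‖∑ n ∈ s, c n * (z : ℂ) ^ (-n)‖ ^ 2 : ℝ) : ℂ) ∂μ
      = ((‖w‖ ^ 2 : ℝ) : ℂ) := by
    have h1 : ((‖w‖ ^ 2 : ℝ) : ℂ)
        = ∑ n ∈ s, ∑ m ∈ s, (starRingEnd ℂ) (c n) * c m
            * ∫ z : Circle, (z : ℂ) ^ (n - m) ∂μ := by
      have : ((‖w‖ ^ 2 : ℝ) : ℂ) = (inner ℂ w w : ℂ) := by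
        rw [inner_self_eq_norm_sq_to_K]; norm_cast
      rw [this, hw]
      rw [sum_inner]
      refine Finset.sum_congr rfl fun n _ => ?_
      rw [inner_smul_left, inner_sum]
      rw [Finset.mul_sum]
      refine Finset.sum_congr rfl fun m _ => ?_
      rw [inner_smul_right, inner_zpow, hμ (n - m)]
      ring
    rw [h1]
    have h2 : ∀ n ∈ s, ∀ m ∈ s, (starRingEnd ℂ) (c n) * c m * ∫ z : Circle, (z : ℂ) ^ (n - m) ∂μ
        = ∫ z : Circle, (starRingEnd ℂ) (c n) * c m * (z : ℂ) ^ (n - m) ∂μ := fun n _ m _ =>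
      (integral_const_mul _ _).symm
    rw [Finset.sum_congr rfl (fun n hn => Finset.sum_congr rfl (h2 n hn))]
    have h3 : ∀ n ∈ s, (∑ m ∈ s, ∫ z : Circle, (starRingEnd ℂ) (c n) * c m * (z : ℂ) ^ (n - m) ∂μ)
        = ∫ z : Circle, ∑ m ∈ s, (starRingEnd ℂ) (c n) * c m * (z : ℂ) ^ (n - m) ∂μ := fun n _ =>
      (integral_finset_sum s fun m _ => ((int_chi (n - m)).const_mul _)).symm
    rw [Finset.sum_congr rfl h3, ← integral_finset_sum]
    swap
    · exact fun n _ => integrable_finset_sum _ fun m _ => ((int_chi (n - m)).const_mul _)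
    refine integral_congr_ae (Filter.Eventually.of_forall fun z => ?_)
    have hz : (z : ℂ) ≠ 0 := Circle.coe_ne_zero z
    have hconj : (starRingEnd ℂ) (∑ n ∈ s, c n * (z : ℂ) ^ (-n))
        = ∑ n ∈ s, (starRingEnd ℂ) (c n) * (z : ℂ) ^ n := by
      rw [map_sum]
      refine Finset.sum_congr rfl fun n _ => ?_
      rw [map_mul, conj_zpow, neg_neg]
    calc ((‖∑ n ∈ s, c n * (z : ℂ) ^ (-n)‖ ^ 2 : ℝ) : ℂ)
        = (starRingEnd ℂ) (∑ n ∈ s, c n * (z : ℂ) ^ (-n)) * (∑ m ∈ s, c m * (z : ℂ) ^ (-m)) := by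
          rw [RCLike.conj_mul]; norm_cast
      _ = ∑ n ∈ s, ∑ m ∈ s, (starRingEnd ℂ) (c n) * c m * (z : ℂ) ^ (n - m) := by
          rw [hconj, Finset.sum_mul_sum]
          refine Finset.sum_congr rfl fun n _ => Finset.sum_congr rfl fun m _ => ?_
          rw [sub_eq_add_neg, zpow_add₀ hz]
          ring
  have h6 : ∫ z : Circle, ((‖∑ n ∈ s, c n * (z : ℂ) ^ (-n)‖ ^ 2 : ℝ) : ℂ) ∂μ
      = ((∫ z : Circle, ‖∑ n ∈ s, c n * (z : ℂ) ^ (-n)‖ ^ 2 ∂μ : ℝ) : ℂ) := integral_ofReal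
  rw [h6] at key
  exact_mod_cast key

lemma intertwine_zpow (T : H ≃ₗᵢ[ℂ] H) (S : K ≃ₗᵢ[ℂ] K) (Φ : H →L[ℂ] K)
    (hint : ∀ x : H, Φ (T x) = S (Φ x)) (n : ℤ) (x : H) :
    Φ ((T ^ n) x) = (S ^ n) (Φ x) := by
  have hneg : ∀ y : H, Φ (T⁻¹ y) = S⁻¹ (Φ y) := by
    intro y
    have h := hint (T⁻¹ y)
    rw [show T (T⁻¹ y) = y from T.apply_symm_apply y] at h
    rw [h, show (S⁻¹) (S (Φ (T⁻¹ y))) = Φ (T⁻¹ y) from S.symm_apply_apply _]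
  induction n using Int.induction_on with
  | zero => simp
  | succ k ih =>
      have h1 : T ^ ((k : ℤ) + 1) = T * T ^ (k : ℤ) := by rw [add_comm]; exact zpow_one_add T k
      have h2 : S ^ ((k : ℤ) + 1) = S * S ^ (k : ℤ) := by rw [add_comm]; exact zpow_one_add S k
      rw [h1, h2]
      show Φ (T ((T ^ (k:ℤ)) x)) = S ((S ^ (k:ℤ)) (Φ x))
      rw [hint, ih]
  | pred k ih =>
      have h1 : T ^ (-(k : ℤ) - 1) = T⁻¹ * T ^ (-(k : ℤ)) := by
        rw [sub_eq_add_neg, add_comm, zpow_add, zpow_neg_one]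
      have h2 : S ^ (-(k : ℤ) - 1) = S⁻¹ * S ^ (-(k : ℤ)) := by
        rw [sub_eq_add_neg, add_comm, zpow_add, zpow_neg_one]
      rw [h1, h2]
      show Φ (T⁻¹ ((T ^ (-(k:ℤ))) x)) = S⁻¹ ((S ^ (-(k:ℤ))) (Φ x))
      rw [hneg, ih]

variable [CompleteSpace H] [CompleteSpace K]

lemma poly_le (T : H ≃ₗᵢ[ℂ] H) (S : K ≃ₗᵢ[ℂ] K)
    (Φ : H →L[ℂ] K) (hΦnorm : ‖Φ‖ ≤ 1)
    (hint : ∀ x : H, Φ (T x) = S (Φ x))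
    (f : H) (μf μΦf : Measure Circle)
    [IsFiniteMeasure μf] [IsFiniteMeasure μΦf]
    (hf : IsSpectralMeasure T f μf) (hΦf : IsSpectralMeasure S (Φ f) μΦf) (c : ℤ →₀ ℂ) :
    ∫ z : Circle, ‖∑ n ∈ c.support, c n * (z : ℂ) ^ (-n)‖ ^ 2 ∂μΦf
      ≤ ∫ z : Circle, ‖∑ n ∈ c.support, c n * (z : ℂ) ^ (-n)‖ ^ 2 ∂μf := by
  rw [spec_norm S (Φ f) μΦf hΦf c, spec_norm T f μf hf c]
  have him : (∑ n ∈ c.support, c n • (S ^ n) (Φ f)) = Φ (∑ n ∈ c.support, c n • (T ^ n) f) := by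
    rw [map_sum]
    exact Finset.sum_congr rfl fun n _ => by
      rw [ContinuousLinearMap.map_smul, intertwine_zpow T S Φ hint]
  rw [him]
  have hb : ‖Φ (∑ n ∈ c.support, c n • (T ^ n) f)‖ ≤ ‖∑ n ∈ c.support, c n • (T ^ n) f‖ :=
    calc ‖Φ (∑ n ∈ c.support, c n • (T ^ n) f)‖
        ≤ ‖Φ‖ * ‖∑ n ∈ c.support, c n • (T ^ n) f‖ := Φ.le_opNorm _
      _ ≤ 1 * ‖∑ n ∈ c.support, c n • (T ^ n) f‖ :=
          mul_le_mul_of_nonneg_right hΦnorm (norm_nonneg _)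
      _ = ‖∑ n ∈ c.support, c n • (T ^ n) f‖ := one_mul _
  exact pow_le_pow_left₀ (norm_nonneg _) hb 2


lemma cont_le (T : H ≃ₗᵢ[ℂ] H) (S : K ≃ₗᵢ[ℂ] K)
    (Φ : H →L[ℂ] K) (hΦnorm : ‖Φ‖ ≤ 1)
    (hint : ∀ x : H, Φ (T x) = S (Φ x))
    (f : H) (μf μΦf : Measure Circle)
    [IsFiniteMeasure μf] [IsFiniteMeasure μΦf]
    (hf : IsSpectralMeasure T f μf) (hΦf : IsSpectralMeasure S (Φ f) μΦf)
    (ψ : C(Circle, ℝ)) (hψ : ∀ z, 0 ≤ ψ z) :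
    ∫ z, ψ z ∂μΦf ≤ ∫ z, ψ z ∂μf := by
  refine le_of_forall_pos_le_add fun η hη => ?_
  set Mf := (μf Set.univ).toReal with hMf
  set MΦ := (μΦf Set.univ).toReal with hMΦ
  have hMf0 : 0 ≤ Mf := ENNReal.toReal_nonneg
  have hMΦ0 : 0 ≤ MΦ := ENNReal.toReal_nonneg
  set ε := η / (2 * (Mf + 1)) with hε
  have hε0 : 0 < ε := by positivity
  have hεMf : ε * Mf ≤ η / 2 := by
    have h1 : ε * (Mf + 1) = η / 2 := by
      rw [hε, div_mul_eq_mul_div, div_eq_div_iff (ne_of_gt (by linarith)) (by norm_num)]; ring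
    nlinarith
  set g : C(Circle, ℂ) := ⟨fun z => (Real.sqrt (ψ z⁻¹ + ε) : ℂ),
    Complex.continuous_ofReal.comp (Real.continuous_sqrt.comp
      ((ψ.continuous.comp continuous_inv).add continuous_const))⟩ with hg
  set B := ‖g‖ with hB
  have hB0 : 0 ≤ B := norm_nonneg g
  set δ := min 1 (η / (2 * ((2 * B + 1) * (Mf + MΦ) + 1))) with hδ
  have hδ0 : 0 < δ := lt_min one_pos (by positivity)
  have hδ1 : δ ≤ 1 := min_le_left _ _
  have hδ2 : δ * ((2 * B + 1) * (Mf + MΦ)) ≤ η / 2 := by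
    have h := min_le_right 1 (η / (2 * ((2 * B + 1) * (Mf + MΦ) + 1)))
    calc δ * ((2 * B + 1) * (Mf + MΦ))
        ≤ (η / (2 * ((2 * B + 1) * (Mf + MΦ) + 1))) * ((2 * B + 1) * (Mf + MΦ)) :=
          mul_le_mul_of_nonneg_right h (by positivity)
      _ ≤ η / 2 := by
          rw [div_mul_eq_mul_div, div_le_div_iff₀ (by positivity) (by positivity)]
          nlinarith [hη.le, mul_nonneg (mul_nonneg (by linarith : (0:ℝ) ≤ 2 * B + 1)
            (by linarith : (0:ℝ) ≤ Mf + MΦ)) hη.le]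
  obtain ⟨p, hp_mem, hp_close⟩ : ∃ p ∈ trigSpan, dist g p < δ := by
    have hgmem : g ∈ closure (trigSpan : Set C(Circle, ℂ)) := by
      rw [trigSpan_dense.closure_eq]; trivial
    obtain ⟨p, hp, hd⟩ := Metric.mem_closure_iff.mp hgmem δ hδ0
    exact ⟨p, hp, hd⟩
  obtain ⟨c, hc⟩ := Finsupp.mem_span_range_iff_exists_finsupp.mp hp_mem
  set s := c.support with hs
  have hp_eval : ∀ z : Circle, p z⁻¹ = ∑ n ∈ s, c n * (z : ℂ) ^ (-n) := by
    intro z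
    rw [← hc]
    have h1 : (c.sum fun n a => a • chi n) = ∑ n ∈ s, c n • chi n := rfl
    rw [h1]
    have h2 : (∑ n ∈ s, c n • chi n) z⁻¹ = ∑ n ∈ s, (c n • chi n) z⁻¹ := by
      simp
    rw [h2]
    refine Finset.sum_congr rfl fun n _ => ?_
    show c n • (chi n z⁻¹) = c n * (z : ℂ) ^ (-n)
    rw [chi_apply, Circle.coe_inv, inv_zpow, ← zpow_neg]
    simp [smul_eq_mul]
  -- pointwise estimate
  have hpt : ∀ z : Circle, |‖∑ n ∈ s, c n * (z : ℂ) ^ (-n)‖ ^ 2 - (ψ z + ε)| ≤ δ * (2 * B + 1) := by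
    intro z
    have hψε : 0 ≤ ψ z + ε := by have := hψ z; linarith
    have e1 : Real.sqrt (ψ z + ε) ^ 2 = ψ z + ε := Real.sq_sqrt hψε
    set a := ‖∑ n ∈ s, c n * (z : ℂ) ^ (-n)‖ with ha
    set b := Real.sqrt (ψ z + ε) with hb
    have ha0 : 0 ≤ a := norm_nonneg _
    have hb0' : 0 ≤ b := Real.sqrt_nonneg _
    have hgz : g z⁻¹ = (b : ℂ) := by
      show (Real.sqrt (ψ (z⁻¹)⁻¹ + ε) : ℂ) = (b : ℂ)
      rw [inv_inv]
    have hab : |a - b| ≤ δ := by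
      have hdz : dist (p z⁻¹) (g z⁻¹) ≤ dist p g := ContinuousMap.dist_apply_le_dist _
      have hbnorm : ‖g z⁻¹‖ = b := by rw [hgz, Complex.norm_real, Real.norm_eq_abs, abs_of_nonneg hb0']
      have h3 : |a - b| ≤ ‖p z⁻¹ - g z⁻¹‖ := by
        rw [← hp_eval z] at ha
        rw [ha, ← hbnorm]
        exact abs_norm_sub_norm_le _ _
      have h4 : ‖p z⁻¹ - g z⁻¹‖ = dist (p z⁻¹) (g z⁻¹) := (dist_eq_norm _ _).symm
      calc |a - b| ≤ dist (p z⁻¹) (g z⁻¹) := h3.trans_eq h4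
        _ ≤ dist p g := hdz
        _ = dist g p := dist_comm _ _
        _ ≤ δ := hp_close.le
    have hbB : b ≤ B := by
      have h5 : ‖g z⁻¹‖ ≤ ‖g‖ := g.norm_coe_le_norm z⁻¹
      rw [hgz, Complex.norm_real, Real.norm_eq_abs, abs_of_nonneg hb0'] at h5
      exact h5
    have haB : a ≤ B + δ := by
      have := abs_le.mp hab
      linarith
    have e2 : |a ^ 2 - b ^ 2| = |a - b| * (a + b) := by
      rw [show a ^ 2 - b ^ 2 = (a - b) * (a + b) by ring, abs_mul,
        abs_of_nonneg (by linarith : (0:ℝ) ≤ a + b)]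
    calc |a ^ 2 - (ψ z + ε)| = |a ^ 2 - b ^ 2| := by rw [e1]
      _ = |a - b| * (a + b) := e2
      _ ≤ δ * (2 * B + 1) := by
          apply mul_le_mul hab _ (by linarith) (le_trans (abs_nonneg _) hab)
          linarith
  -- integrability
  have hqcont : Continuous fun z : Circle => ‖∑ n ∈ s, c n * (z : ℂ) ^ (-n)‖ ^ 2 := by
    have : (fun z : Circle => ‖∑ n ∈ s, c n * (z : ℂ) ^ (-n)‖ ^ 2)
        = fun z : Circle => ‖p z⁻¹‖ ^ 2 := funext fun z => by rw [hp_eval z]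
    rw [this]
    exact ((p.continuous.comp continuous_inv).norm).pow 2
  have intψf : Integrable (fun z => ψ z) μf := integrable ψ μf
  have intψΦ : Integrable (fun z => ψ z) μΦf := integrable ψ μΦf
  have intqf : Integrable (fun z : Circle => ‖∑ n ∈ s, c n * (z : ℂ) ^ (-n)‖ ^ 2) μf :=
    integrable' hqcont μf
  have intqΦ : Integrable (fun z : Circle => ‖∑ n ∈ s, c n * (z : ℂ) ^ (-n)‖ ^ 2) μΦf :=
    integrable' hqcont μΦf
  -- main chain
  have I1 : ∫ z, ψ z ∂μΦf
      ≤ (∫ z : Circle, ‖∑ n ∈ s, c n * (z : ℂ) ^ (-n)‖ ^ 2 ∂μΦf) + δ * (2 * B + 1) * MΦ := by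
    have hpt1 : ∀ z : Circle, ψ z ≤ ‖∑ n ∈ s, c n * (z : ℂ) ^ (-n)‖ ^ 2 + δ * (2 * B + 1) := by
      intro z
      have := (abs_le.mp (hpt z)).1
      have := hε0
      linarith
    calc ∫ z, ψ z ∂μΦf
        ≤ ∫ z : Circle, (‖∑ n ∈ s, c n * (z : ℂ) ^ (-n)‖ ^ 2 + δ * (2 * B + 1)) ∂μΦf :=
          integral_mono intψΦ (intqΦ.add (integrable_const _)) hpt1
      _ = (∫ z : Circle, ‖∑ n ∈ s, c n * (z : ℂ) ^ (-n)‖ ^ 2 ∂μΦf) + δ * (2 * B + 1) * MΦ := by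
          rw [integral_add intqΦ (integrable_const _), integral_const, smul_eq_mul, measureReal_def]
          ring
  have I2 := poly_le T S Φ hΦnorm hint f μf μΦf hf hΦf c
  have I3 : (∫ z : Circle, ‖∑ n ∈ s, c n * (z : ℂ) ^ (-n)‖ ^ 2 ∂μf)
      ≤ (∫ z, ψ z ∂μf) + (ε + δ * (2 * B + 1)) * Mf := by
    have hpt2 : ∀ z : Circle,
        ‖∑ n ∈ s, c n * (z : ℂ) ^ (-n)‖ ^ 2 ≤ ψ z + (ε + δ * (2 * B + 1)) := by
      intro z
      have := (abs_le.mp (hpt z)).2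
      linarith
    calc (∫ z : Circle, ‖∑ n ∈ s, c n * (z : ℂ) ^ (-n)‖ ^ 2 ∂μf)
        ≤ ∫ z : Circle, (ψ z + (ε + δ * (2 * B + 1))) ∂μf :=
          integral_mono intqf (intψf.add (integrable_const _)) hpt2
      _ = (∫ z, ψ z ∂μf) + (ε + δ * (2 * B + 1)) * Mf := by
          rw [integral_add intψf (integrable_const _), integral_const, smul_eq_mul, measureReal_def]
          ring
  have hδ3 : δ * (2 * B + 1) * MΦ + δ * (2 * B + 1) * Mf ≤ η / 2 := by
    have : δ * (2 * B + 1) * MΦ + δ * (2 * B + 1) * Mf = δ * ((2 * B + 1) * (Mf + MΦ)) := by ring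
    linarith [hδ2, this.le, this.ge]
  calc ∫ z, ψ z ∂μΦf
      ≤ (∫ z : Circle, ‖∑ n ∈ s, c n * (z : ℂ) ^ (-n)‖ ^ 2 ∂μΦf) + δ * (2 * B + 1) * MΦ := I1
    _ ≤ (∫ z : Circle, ‖∑ n ∈ s, c n * (z : ℂ) ^ (-n)‖ ^ 2 ∂μf) + δ * (2 * B + 1) * MΦ := by
        linarith [I2]
    _ ≤ (∫ z, ψ z ∂μf) + (ε + δ * (2 * B + 1)) * Mf + δ * (2 * B + 1) * MΦ := by linarith [I3]
    _ ≤ (∫ z, ψ z ∂μf) + η := by nlinarith [hεMf, hδ3]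

end SMhelper

theorem spectral_measure_of_markov_image_abs_continuous
    {H K : Type*}
    [NormedAddCommGroup H] [InnerProductSpace ℂ H] [CompleteSpace H]
    [NormedAddCommGroup K] [InnerProductSpace ℂ K] [CompleteSpace K]
    (T : H ≃ₗᵢ[ℂ] H) (S : K ≃ₗᵢ[ℂ] K)
    (Φ : H →L[ℂ] K) (hΦnorm : ‖Φ‖ ≤ 1)
    (hint : ∀ x : H, Φ (T x) = S (Φ x))
    (f : H) (μf μΦf : Measure Circle)
    [IsFiniteMeasure μf] [IsFiniteMeasure μΦf]
    (hf : IsSpectralMeasure T f μf) (hΦf : IsSpectralMeasure S (Φ f) μΦf) :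
    μΦf ≪ μf := by
  have key : ∀ U : Set Circle, IsOpen U → μΦf U ≤ μf U := by
    intro U hU
    rw [hU.measure_eq_iSup_isCompact]
    refine iSup_le fun Kc => iSup_le fun hKU => iSup_le fun hK => ?_
    have hd : Disjoint Kc Uᶜ := Set.disjoint_left.mpr fun x hx hxc => hxc (hKU hx)
    obtain ⟨φ, hφ1, hφ0, -, hφ01⟩ :=
      exists_continuous_one_zero_of_isCompact hK (isClosed_compl_iff.mpr hU) hd
    have hφnn : ∀ z, 0 ≤ φ z := fun z => (hφ01 z).1
    have hint1 : (μΦf Kc).toReal ≤ ∫ z, φ z ∂μΦf := by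
      have hKm : MeasurableSet Kc := hK.measurableSet
      have h1 : (μΦf Kc).toReal = ∫ z, Set.indicator Kc (fun _ => (1:ℝ)) z ∂μΦf := by
        rw [integral_indicator_const _ hKm, smul_eq_mul, mul_one, measureReal_def]
      rw [h1]
      refine integral_mono ((integrable_const (1:ℝ)).indicator hKm)
        (SMhelper.integrable φ μΦf) fun z => ?_
      by_cases hz : z ∈ Kc
      · rw [Set.indicator_of_mem hz]
        exact le_of_eq (hφ1 hz).symm
      · rw [Set.indicator_of_notMem hz]
        exact hφnn z
    have hint2 : ∫ z, φ z ∂μΦf ≤ ∫ z, φ z ∂μf :=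
      SMhelper.cont_le T S Φ hΦnorm hint f μf μΦf hf hΦf φ hφnn
    have hint3 : ∫ z, φ z ∂μf ≤ (μf U).toReal := by
      have hUm : MeasurableSet U := hU.measurableSet
      have h1 : (μf U).toReal = ∫ z, Set.indicator U (fun _ => (1:ℝ)) z ∂μf := by
        rw [integral_indicator_const _ hUm, smul_eq_mul, mul_one, measureReal_def]
      rw [h1]
      refine integral_mono (SMhelper.integrable φ μf)
        ((integrable_const (1:ℝ)).indicator hUm) fun z => ?_
      by_cases hz : z ∈ U
      · rw [Set.indicator_of_mem hz]
        exact (hφ01 z).2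
      · rw [Set.indicator_of_notMem hz]
        exact le_of_eq (hφ0 hz)
    have := (hint1.trans hint2).trans hint3
    exact (ENNReal.toReal_le_toReal (measure_ne_top _ _) (measure_ne_top _ _)).mp this
  refine Measure.AbsolutelyContinuous.mk fun A hA hA0 => ?_
  refine le_antisymm ?_ (by simp)
  refine ENNReal.le_of_forall_pos_le_add fun ε hε _ => ?_
  rw [zero_add]
  have hlt : μf A < (ε : ENNReal) := by rw [hA0]; exact ENNReal.coe_pos.mpr hε
  obtain ⟨U, hAU, hUopen, hUlt⟩ := Set.exists_isOpen_lt_of_lt A _ hlt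
  exact ((measure_mono hAU).trans (key U hUopen)).trans hUlt.le
end
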